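/- arXiv:1302.2077 — 3 statements merged into one kernel-verified Lean document; each statement's English description precedes it below -/
import Mathlib

section
/- Let A be a commutative ring, let L be a unit in A, and let a,b,a',b' be positive integers with d = gcd(b,b'). Then the resultant of the polynomials 1 − L^a·T^b and 1 − L^{a'}·T^{b'} (in the variable T) equals (−1)^{b'} · L^{a·b'} · (1 − L^{(a'b − ab')/d})^d, where L^{(a'b−ab')/d} means the appropriate (possibly negative) power of the unit L. In particular, if (a,b) and (a',b') are not proportional, then this resultant is a unit whenever 1 − L^m is a unit in A for every nonzero integer m. -/
set_option autoImplicit false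

open Polynomial

/-- The resultant of two polynomials `P`, `Q` over a commutative ring,
defined as the determinant of their Sylvester matrix. -/
noncomputable def resultant {A : Type*} [CommRing A] (P Q : A[X]) : A :=
  Matrix.det (Matrix.of (fun i j : Fin (Q.natDegree + P.natDegree) =>
    if (i : ℕ) < Q.natDegree then
      (if (i : ℕ) ≤ (j : ℕ) ∧ (j : ℕ) ≤ (i : ℕ) + P.natDegree then
        P.coeff ((i : ℕ) + P.natDegree - (j : ℕ)) else 0)
    else
      (if (i : ℕ) - Q.natDegree ≤ (j : ℕ) ∧ (j : ℕ) ≤ (i : ℕ) - Q.natDegree + Q.natDegree then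
        Q.coeff ((i : ℕ) - Q.natDegree + Q.natDegree - (j : ℕ)) else 0)))

section Aux
variable {A : Type*} [CommRing A]
open Fin.NatCast

-- Lemma: surjectivity of nsmul by coprime element
lemma exists_nsmul_eq (β n₀ : ℕ) [NeZero n₀] (hcop : Nat.Coprime β n₀) (c : Fin n₀) :
    ∃ m : ℕ, m • (β : Fin n₀) = c := by
  have hn : 0 < n₀ := Nat.pos_of_ne_zero (NeZero.ne n₀)
  rcases eq_or_lt_of_le (Nat.succ_le_of_lt hn) with h1 | h1
  · refine ⟨0, ?_⟩
    have : ∀ x y : Fin n₀, x = y := by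
      intro x y; apply Fin.ext; omega
    exact this _ _
  · obtain ⟨x, -, hx⟩ := Nat.exists_mul_mod_eq_one_of_coprime hcop h1
    refine ⟨x * c.val, ?_⟩
    have h2 : (x * c.val) • (β : Fin n₀) = ((x * c.val * β : ℕ) : Fin n₀) := by
      rw [← nsmul_one β, smul_smul, nsmul_one]
    rw [h2]
    apply Fin.ext
    rw [Fin.val_natCast]
    have : x * c.val * β = c.val * (β * x) := by ring
    rw [this, Nat.mul_mod, hx, mul_one, Nat.mod_mod_of_dvd _ (dvd_refl _),
      Nat.mod_eq_of_lt c.isLt]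


lemma perm_shift {n₀ : ℕ} [NeZero n₀] (β : ℕ) (hg : (β : Fin n₀) ≠ 0)
    (hcop : Nat.Coprime β n₀) (σ : Equiv.Perm (Fin n₀))
    (h : ∀ i, σ i = i ∨ σ i = i - (β : Fin n₀)) :
    σ = 1 ∨ σ = Equiv.subRight ((β : ℕ) : Fin n₀) := by
  set g : Fin n₀ := (β : Fin n₀) with hgdef
  by_cases hall : ∀ i, σ i = i - g
  · right; ext i; rw [hall i, Equiv.subRight_apply]
  · left
    push_neg at hall
    obtain ⟨j, hj⟩ := hall
    have hjfix : σ j = j := (h j).resolve_right hj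
    apply Equiv.ext
    intro i
    simp only [Equiv.Perm.coe_one, id_eq]
    by_contra hi
    have hiS : σ i = i - g := (h i).resolve_left hi
    obtain ⟨m, hm⟩ := exists_nsmul_eq β n₀ hcop (i - j)
    have hex : ∃ k : ℕ, σ (i - k • g) ≠ (i - k • g) - g := by
      refine ⟨m, ?_⟩
      rw [hm]
      have : i - (i - j) = j := by abel
      rw [this, hjfix]
      intro hh
      exact hg (by rwa [eq_comm, sub_eq_self] at hh)
    have h0 : ¬ (σ (i - 0 • g) ≠ (i - 0 • g) - g) := by
      simp only [zero_smul, sub_zero]; exact fun hh => hh hiS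
    obtain ⟨k, hk⟩ := Nat.exists_eq_succ_of_ne_zero (fun h0' => h0 (h0' ▸ Nat.find_spec hex))
    have hkmin := Nat.find_min hex (m := k) (by omega)
    push_neg at hkmin
    have hkspec := Nat.find_spec hex
    rw [hk] at hkspec
    set x := i - k • g with hx
    have h1 : σ x = x - g := hkmin
    have h2 : i - (k+1) • g = x - g := by rw [hx, succ_nsmul]; abel
    rw [h2] at hkspec
    have h3 : σ (x - g) = x - g := (h (x - g)).resolve_right hkspec
    have := σ.injective (h1.trans h3.symm)
    exact hg (by rwa [eq_comm, sub_eq_self] at this)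


lemma addRight_pow {G : Type*} [AddGroup G] (x : G) (m : ℕ) :
    (Equiv.addRight x) ^ m = Equiv.addRight (m • x) := by
  induction m with
  | zero => ext i; simp
  | succ k ih =>
    ext i
    rw [pow_succ, Equiv.Perm.mul_apply, ih]
    simp only [succ_nsmul, add_assoc, Equiv.coe_addRight]
    rw [(AddCommute.refl x).nsmul_right k]

lemma sign_subRight (n₀ : ℕ) [NeZero n₀] (β : ℕ) :
    Equiv.Perm.sign (Equiv.subRight ((β : ℕ) : Fin n₀)) = ((-1) ^ (n₀ - 1)) ^ β := by
  obtain ⟨m, rfl⟩ := Nat.exists_eq_succ_of_ne_zero (NeZero.ne n₀)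
  have h1 : Equiv.subRight ((β : ℕ) : Fin (m+1)) = (Equiv.addRight ((β : ℕ) : Fin (m+1))).symm := by
    ext i; simp [sub_eq_add_neg]
  have h2 : Equiv.addRight ((β : ℕ) : Fin (m+1)) = (finRotate (m+1)) ^ β := by
    have h3 : finRotate (m+1) = Equiv.addRight (1 : Fin (m+1)) := by
      ext i; simp [finRotate_succ_apply]
    rw [h3, addRight_pow]
    congr 1
    rw [nsmul_one]
  rw [h1]
  have : Equiv.Perm.sign (Equiv.addRight ((β : ℕ) : Fin (m+1))).symm
      = Equiv.Perm.sign (Equiv.addRight ((β : ℕ) : Fin (m+1))) := Equiv.Perm.sign_symm _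
  rw [this, h2, map_pow, sign_finRotate]



lemma prod_split (x y : A) (β' β : ℕ) :
    (∏ i : Fin (β' + β), (if (i : ℕ) < β' then x else y)) = x ^ β' * y ^ β := by
  rw [Fin.prod_univ_eq_prod_range (fun j => if j < β' then x else y) (β' + β),
    Finset.prod_range_add]
  congr 1
  · rw [Finset.prod_congr rfl (fun j hj => if_pos (Finset.mem_range.mp hj)),
      Finset.prod_const, Finset.card_range]
  · rw [Finset.prod_congr rfl (fun j _ => if_neg (by omega)), Finset.prod_const,
      Finset.card_range]



/-- The basic block matrix. -/
def sylBlock (u v : A) (β β' : ℕ) : Matrix (Fin (β' + β)) (Fin (β' + β)) A :=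
  Matrix.of fun i j =>
    if (i : ℕ) < β' then
      (if (j : ℕ) = (i : ℕ) then -u else if (j : ℕ) = (i : ℕ) + β then 1 else 0)
    else
      (if (j : ℕ) + β' = (i : ℕ) then -v else if (j : ℕ) = (i : ℕ) then 1 else 0)

lemma det_sylBlock (u v : A) (β β' : ℕ) (hβ : 0 < β) (hβ' : 0 < β')
    (hcop : Nat.Coprime β β') :
    (sylBlock u v β β').det = (-u) ^ β' - (-1) ^ β' * v ^ β := by
  haveI : NeZero (β' + β) := ⟨by omega⟩
  set n₀ := β' + β with hn₀
  set g : Fin n₀ := ((β : ℕ) : Fin n₀) with hgdef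
  have hgval : (g : ℕ) = β := by
    rw [hgdef, Fin.val_natCast, Nat.mod_eq_of_lt (by omega)]
  have hg0 : g ≠ 0 := by
    intro h
    have := congrArg Fin.val h
    rw [hgval] at this
    simp at this; omega
  have hcop' : Nat.Coprime β n₀ := by
    have : Nat.gcd β (β' + β) = Nat.gcd β β' := Nat.gcd_add_self_right β β'
    unfold Nat.Coprime
    rw [hn₀, this]; exact hcop
  -- value of entries on the two relevant diagonals
  have hdiag : ∀ i : Fin n₀, sylBlock u v β β' i i = (if (i : ℕ) < β' then -u else 1) := by
    intro i
    by_cases hi : (i : ℕ) < β' <;> simp [sylBlock, hi] <;> omega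
  have haddval : ∀ r : Fin n₀, ((r + g : Fin n₀) : ℕ)
      = (if (r : ℕ) < β' then (r : ℕ) + β else (r : ℕ) - β') := by
    intro r
    rw [Fin.val_add, hgval]
    by_cases hr : (r : ℕ) < β'
    · rw [if_pos hr, Nat.mod_eq_of_lt (by omega)]
    · rw [if_neg hr]
      have h1 : (r : ℕ) + β - n₀ < n₀ := by have := r.isLt; omega
      have : (r : ℕ) + β = ((r : ℕ) + β - n₀) + n₀ := by have := r.isLt; omega
      rw [this, Nat.add_mod_right, Nat.mod_eq_of_lt h1]
      have := r.isLt; omega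
  have hshift : ∀ r : Fin n₀, sylBlock u v β β' r (r + g)
      = (if (r : ℕ) < β' then 1 else -v) := by
    intro r
    have hv := haddval r
    by_cases hr : (r : ℕ) < β'
    · rw [if_pos hr] at hv
      simp only [sylBlock, Matrix.of_apply, if_pos hr, hv]
      rw [if_neg (by omega)]
      simp [hr]
    · rw [if_neg hr] at hv
      simp only [sylBlock, Matrix.of_apply, if_neg hr, hv]
      rw [if_pos (by have := r.isLt; omega)]
  have hzero : ∀ r c : Fin n₀, sylBlock u v β β' r c ≠ 0 → c = r ∨ c = r + g := by
    intro r c hne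
    by_cases hr : (r : ℕ) < β'
    · simp only [sylBlock, Matrix.of_apply, if_pos hr] at hne
      by_cases h1 : (c : ℕ) = (r : ℕ)
      · exact Or.inl (Fin.ext h1)
      · rw [if_neg h1] at hne
        by_cases h2 : (c : ℕ) = (r : ℕ) + β
        · right; apply Fin.ext; rw [haddval r, if_pos hr]; exact h2
        · rw [if_neg h2] at hne; exact absurd rfl hne
    · simp only [sylBlock, Matrix.of_apply, if_neg hr] at hne
      by_cases h1 : (c : ℕ) + β' = (r : ℕ)
      · right; apply Fin.ext; rw [haddval r, if_neg hr]; omega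
      · rw [if_neg h1] at hne
        by_cases h2 : (c : ℕ) = (r : ℕ)
        · exact Or.inl (Fin.ext h2)
        · rw [if_neg h2] at hne; exact absurd rfl hne
  set σ₁ : Equiv.Perm (Fin n₀) := Equiv.subRight ((β : ℕ) : Fin n₀) with hσ₁
  have hone_ne : (1 : Equiv.Perm (Fin n₀)) ≠ σ₁ := by
    intro h
    have h0 := congrArg (fun σ : Equiv.Perm (Fin n₀) => σ 0) h
    simp only [Equiv.Perm.coe_one, id_eq, hσ₁, Equiv.subRight_apply] at h0
    rw [zero_sub, eq_comm, neg_eq_zero] at h0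
    exact hg0 h0
  rw [Matrix.det_apply']
  rw [← Finset.sum_subset (Finset.subset_univ ({1, σ₁} : Finset (Equiv.Perm (Fin n₀))))
    (by
      intro σ _ hσ
      have hnotall : ¬ ∀ i, σ i = i ∨ σ i = i - ((β : ℕ) : Fin n₀) := by
        intro hall
        rcases perm_shift β (by rw [← hgdef]; exact hg0) hcop' σ hall with h | h
        · exact absurd (by rw [h]; exact Finset.mem_insert_self _ _) hσ
        · refine absurd ?_ hσ
          rw [h, hσ₁]
          exact Finset.mem_insert_of_mem (Finset.mem_singleton_self _)
      push_neg at hnotall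
      obtain ⟨i, hi1, hi2⟩ := hnotall
      apply mul_eq_zero_of_right
      apply Finset.prod_eq_zero (Finset.mem_univ i)
      by_contra hne
      rcases hzero _ _ hne with h | h
      · exact hi1 h.symm
      · rw [← hgdef] at hi2
        exact hi2 (eq_sub_of_add_eq (by rw [← h])))]
  rw [Finset.sum_pair hone_ne]
  have t1 : (∏ i, sylBlock u v β β' ((1 : Equiv.Perm (Fin n₀)) i) i) = (-u) ^ β' * 1 ^ β := by
    simp only [Equiv.Perm.coe_one, id_eq]
    rw [Finset.prod_congr rfl (fun i _ => hdiag i)]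
    exact prod_split (-u) 1 β' β
  have t2 : (∏ i, sylBlock u v β β' (σ₁ i) i) = 1 ^ β' * (-v) ^ β := by
    rw [← Equiv.prod_comp (Equiv.addRight g) (fun i => sylBlock u v β β' (σ₁ i) i)]
    have haux : ∀ i : Fin n₀,
        sylBlock u v β β' (σ₁ (Equiv.addRight g i)) (Equiv.addRight g i)
          = sylBlock u v β β' i (i + g) := by
      intro i
      have : σ₁ (Equiv.addRight g i) = i := by
        simp only [hσ₁, Equiv.subRight_apply, Equiv.coe_addRight, ← hgdef]
        exact add_sub_cancel_right i g
      rw [this]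
      rfl
    rw [Finset.prod_congr rfl (fun i _ => haux i),
      Finset.prod_congr rfl (fun i _ => hshift i)]
    exact prod_split 1 (-v) β' β
  rw [t1, t2, Equiv.Perm.sign_one, hσ₁, sign_subRight n₀ β]
  have hsign : ((((((-1 : ℤˣ) ^ (n₀ - 1)) ^ β : ℤˣ)) : ℤ) : A) = (-1 : A) ^ ((n₀ - 1) * β) := by
    push_cast
    rw [← pow_mul]
  rw [hsign]
  have hpar : ((n₀ - 1) * β + β) % 2 = (β' + 1) % 2 := by
    have h2 : ¬ (β % 2 = 0 ∧ β' % 2 = 0) := by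
      rintro ⟨x1, x2⟩
      have hdvd : 2 ∣ Nat.gcd β β' :=
        Nat.dvd_gcd (Nat.dvd_of_mod_eq_zero x1) (Nat.dvd_of_mod_eq_zero x2)
      rw [hcop] at hdvd
      omega
    have heq : (n₀ - 1) * β + β = n₀ * β := by
      rw [Nat.sub_mul, one_mul]
      exact Nat.sub_add_cancel (Nat.le_mul_of_pos_left β (by omega))
    rw [heq, hn₀, Nat.mul_mod]
    rcases Nat.mod_two_eq_zero_or_one β with hb2 | hb2 <;>
      rcases Nat.mod_two_eq_zero_or_one β' with hb'2 | hb'2 <;>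
      rw [Nat.add_mod, hb2, hb'2] <;> simp <;> omega
  have hneg : (-1 : A) ^ ((n₀ - 1) * β) * (1 ^ β' * (-v) ^ β)
      = - ((-1) ^ β' * v ^ β) := by
    rw [one_pow, one_mul, neg_pow v β, ← mul_assoc, ← pow_add,
      neg_one_pow_eq_pow_mod_two, hpar, ← neg_one_pow_eq_pow_mod_two, pow_succ]
    ring
  rw [hneg]
  push_cast
  ring



/-- The big sparse Sylvester-type matrix. -/
def sylBig (u v : A) (b b' : ℕ) : Matrix (Fin (b' + b)) (Fin (b' + b)) A :=
  Matrix.of fun i j =>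
    if (i : ℕ) < b' then
      (if (j : ℕ) = (i : ℕ) then -u else if (j : ℕ) = (i : ℕ) + b then 1 else 0)
    else
      (if (j : ℕ) + b' = (i : ℕ) then -v else if (j : ℕ) = (i : ℕ) then 1 else 0)

lemma mulAdd_inj {d m m' k k' : ℕ} (hk : k < d) (hk' : k' < d) :
    m * d + k = m' * d + k' ↔ m = m' ∧ k = k' := by
  constructor
  · intro h
    have hd : 0 < d := by omega
    have h1 : (m * d + k) % d = (m' * d + k') % d := by rw [h]
    rw [mul_comm m d, mul_comm m' d, Nat.mul_add_mod, Nat.mul_add_mod,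
      Nat.mod_eq_of_lt hk, Nat.mod_eq_of_lt hk'] at h1
    have h2 : m * d = m' * d := by omega
    exact ⟨Nat.eq_of_mul_eq_mul_right hd h2, h1⟩
  · rintro ⟨rfl, rfl⟩; rfl

lemma mulAdd_lt {d m k c : ℕ} (hk : k < d) : m * d + k < c * d ↔ m < c := by
  constructor
  · intro h
    by_contra hc
    push_neg at hc
    exact absurd (le_trans (Nat.mul_le_mul_right d hc) (Nat.le_add_right _ k)) (by omega)
  · intro h
    calc m * d + k < m * d + d := by omega
    _ = (m + 1) * d := by ring
    _ ≤ c * d := Nat.mul_le_mul_right d h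

/-- the index equivalence -/
def idxEquiv (n₀ d : ℕ) (hd : 0 < d) : Fin n₀ × Fin d ≃ Fin (n₀ * d) where
  toFun p := ⟨p.1.val * d + p.2.val, by
    calc p.1.val * d + p.2.val < p.1.val * d + d := by omega
    _ = (p.1.val + 1) * d := by ring
    _ ≤ n₀ * d := Nat.mul_le_mul_right d p.1.isLt⟩
  invFun i := (⟨i.val / d, by
      rw [Nat.div_lt_iff_lt_mul hd]; exact i.isLt⟩,
    ⟨i.val % d, Nat.mod_lt _ hd⟩)
  left_inv p := by
    apply Prod.ext
    · apply Fin.ext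
      show (p.1.val * d + p.2.val) / d = p.1.val
      rw [mul_comm, Nat.mul_add_div hd, Nat.div_eq_of_lt p.2.isLt, Nat.add_zero]
    · apply Fin.ext
      show (p.1.val * d + p.2.val) % d = p.2.val
      rw [mul_comm p.1.val d, Nat.mul_add_mod, Nat.mod_eq_of_lt p.2.isLt]
  right_inv i := by
    ext
    show i.val / d * d + i.val % d = i.val
    rw [mul_comm]
    exact Nat.div_add_mod i.val d

lemma det_sylBig (u v : A) (β β' d : ℕ) (hd : 0 < d) :
    (sylBig u v (β*d) (β'*d)).det = (sylBlock u v β β').det ^ d := by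
  have hcast : (β'+β) * d = β'*d + β*d := by ring
  set e : Fin (β'+β) × Fin d ≃ Fin (β'*d + β*d) :=
    (idxEquiv (β'+β) d hd).trans (finCongr hcast) with he
  rw [← Matrix.det_submatrix_equiv_self e (sylBig u v (β*d) (β'*d))]
  have hval : ∀ p : Fin (β'+β) × Fin d, ((e p : Fin (β'*d + β*d)) : ℕ)
      = p.1.val * d + p.2.val := by intro p; rw [he]; rfl
  have hmat : (sylBig u v (β*d) (β'*d)).submatrix e e
      = Matrix.blockDiagonal (fun _ : Fin d => sylBlock u v β β') := by
    ext ⟨m, k⟩ ⟨m', k'⟩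
    rw [Matrix.submatrix_apply, Matrix.blockDiagonal_apply]
    simp only [sylBig, sylBlock, Matrix.of_apply, hval]
    have C0 : (m.val * d + k.val < β'*d) ↔ m.val < β' := mulAdd_lt k.isLt
    have C1 : (m'.val * d + k'.val = m.val * d + k.val) ↔ (m'.val = m.val ∧ k'.val = k.val) :=
      mulAdd_inj k'.isLt k.isLt
    have C2 : (m'.val * d + k'.val = m.val * d + k.val + β*d)
        ↔ (m'.val = m.val + β ∧ k'.val = k.val) := by
      rw [show m.val * d + k.val + β*d = (m.val + β) * d + k.val by ring]
      exact mulAdd_inj k'.isLt k.isLt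
    have C3 : (m'.val * d + k'.val + β'*d = m.val * d + k.val)
        ↔ (m'.val + β' = m.val ∧ k'.val = k.val) := by
      rw [show m'.val * d + k'.val + β'*d = (m'.val + β') * d + k'.val by ring]
      exact mulAdd_inj k'.isLt k.isLt
    simp only [C0, C1, C2, C3]
    by_cases hkk : k = k'
    · have hkv : k'.val = k.val := by rw [hkk]
      rw [if_pos hkk]
      simp only [hkv, and_true]
    · rw [if_neg hkk]
      have hkv : k'.val ≠ k.val := fun h => hkk (Fin.ext h.symm)
      split_ifs <;> simp_all
  rw [hmat, Matrix.det_blockDiagonal, Finset.prod_const, Finset.card_univ, Fintype.card_fin]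





lemma resultant_eq (P Q : A[X]) {m k : ℕ} (hP : P.natDegree = m) (hQ : Q.natDegree = k) :
    _root_.resultant P Q = Matrix.det (Matrix.of (fun i j : Fin (k + m) =>
      if (i : ℕ) < k then
        (if (i : ℕ) ≤ (j : ℕ) ∧ (j : ℕ) ≤ (i : ℕ) + m then
          P.coeff ((i : ℕ) + m - (j : ℕ)) else 0)
      else
        (if (i : ℕ) - k ≤ (j : ℕ) ∧ (j : ℕ) ≤ (i : ℕ) - k + k then
          Q.coeff ((i : ℕ) - k + k - (j : ℕ)) else 0))) := by
  subst hP hQ; rfl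

lemma coeff_binom (u : A) (b : ℕ) (hb : 0 < b) (n : ℕ) :
    ((1 : A[X]) - C u * X ^ b).coeff n
      = (if n = 0 then 1 else 0) - (if n = b then u else 0) := by
  rw [Polynomial.coeff_sub, Polynomial.coeff_one, Polynomial.coeff_C_mul,
    Polynomial.coeff_X_pow]
  by_cases h : n = b <;> simp [h]

lemma natDeg_binom [Nontrivial A] (u : A) (hu : u ≠ 0) (b : ℕ) (hb : 0 < b) :
    ((1 : A[X]) - C u * X ^ b).natDegree = b := by
  apply le_antisymm
  · rw [Polynomial.natDegree_le_iff_coeff_eq_zero]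
    intro N hN
    rw [coeff_binom u b hb, if_neg (by omega), if_neg (by omega), sub_zero]
  · apply Polynomial.le_natDegree_of_ne_zero
    rw [coeff_binom u b hb, if_neg (by omega), if_pos rfl, zero_sub]
    exact neg_ne_zero.mpr hu

lemma res_eq_sylBig [Nontrivial A] (u v : A) (hu : u ≠ 0) (hv : v ≠ 0)
    (b b' : ℕ) (hb : 0 < b) (hb' : 0 < b') :
    _root_.resultant ((1 : A[X]) - C u * X ^ b) ((1 : A[X]) - C v * X ^ b')
      = (sylBig u v b b').det := by
  rw [resultant_eq _ _ (natDeg_binom u hu b hb) (natDeg_binom v hv b' hb')]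
  congr 1
  ext i j
  simp only [Matrix.of_apply, sylBig]
  by_cases hi : (i : ℕ) < b'
  · rw [if_pos hi, if_pos hi]
    by_cases hr : (i : ℕ) ≤ (j : ℕ) ∧ (j : ℕ) ≤ (i : ℕ) + b
    · rw [if_pos hr, coeff_binom u b hb]
      by_cases h1 : (j : ℕ) = (i : ℕ)
      · rw [if_pos h1, if_neg (by omega), if_pos (by omega), zero_sub]
      · rw [if_neg h1]
        by_cases h2 : (j : ℕ) = (i : ℕ) + b
        · rw [if_pos h2, if_pos (by omega), if_neg (by omega), sub_zero]
        · rw [if_neg h2, if_neg (by omega), if_neg (by omega), sub_zero]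
    · rw [if_neg hr, if_neg (by omega), if_neg (by omega)]
  · rw [if_neg hi, if_neg hi]
    have hik : b' ≤ (i : ℕ) := by omega
    by_cases hr : (i : ℕ) - b' ≤ (j : ℕ) ∧ (j : ℕ) ≤ (i : ℕ) - b' + b'
    · rw [if_pos hr, coeff_binom v b' hb']
      by_cases h1 : (j : ℕ) + b' = (i : ℕ)
      · rw [if_pos h1, if_neg (by omega), if_pos (by omega), zero_sub]
      · rw [if_neg h1]
        by_cases h2 : (j : ℕ) = (i : ℕ)
        · rw [if_pos h2, if_pos (by omega), if_neg (by omega), sub_zero]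
        · rw [if_neg h2, if_neg (by omega), if_neg (by omega), sub_zero]
    · rw [if_neg hr, if_neg (by omega), if_neg (by omega)]

end Aux

/-- For a unit `L` of a commutative ring `A` and positive integers `a, b, a', b'` with
`d = gcd(b,b')`, the resultant of `1 − L^a T^b` and `1 − L^{a'} T^{b'}` equals
`(−1)^{b'} L^{ab'} (1 − L^{(a'b − ab')/d})^d` (powers of the unit `L`, possibly negative).
In particular, if `(a,b)` and `(a',b')` are not proportional, this resultant is a unit
whenever `1 − L^m` is a unit for every nonzero integer `m`. -/
theorem stmt_1 (A : Type*) [CommRing A] (L : Aˣ) (a b a' b' : ℕ)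
    (ha : 0 < a) (hb : 0 < b) (ha' : 0 < a') (hb' : 0 < b')
    (d : ℕ) (hd : d = Nat.gcd b b') :
    _root_.resultant ((1 : A[X]) - C ((L : A) ^ a) * X ^ b)
        ((1 : A[X]) - C ((L : A) ^ a') * X ^ b')
      = (-1) ^ b' * ((L ^ (a * b') : Aˣ) : A) *
          ((1 : A) - ((L ^ (((a' : ℤ) * b - (a : ℤ) * b') / (d : ℤ)) : Aˣ) : A)) ^ d
    ∧ ((a' : ℤ) * b ≠ (a : ℤ) * b' →
        (∀ m : ℤ, m ≠ 0 → IsUnit ((1 : A) - ((L ^ m : Aˣ) : A))) →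
        IsUnit (_root_.resultant ((1 : A[X]) - C ((L : A) ^ a) * X ^ b)
          ((1 : A[X]) - C ((L : A) ^ a') * X ^ b'))) := by
  rcases subsingleton_or_nontrivial A with hsub | hnt
  · exact ⟨Subsingleton.elim _ _, fun _ _ => isUnit_of_subsingleton _⟩
  · set u : A := (L : A) ^ a with hu
    set v : A := (L : A) ^ a' with hv
    have hdpos : 0 < d := hd ▸ Nat.gcd_pos_of_pos_left b' hb
    have hdvdb : d ∣ b := hd ▸ Nat.gcd_dvd_left b b'
    have hdvdb' : d ∣ b' := hd ▸ Nat.gcd_dvd_right b b'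
    set β : ℕ := b / d with hβdef
    set β' : ℕ := b' / d with hβ'def
    have hbd : β * d = b := Nat.div_mul_cancel hdvdb
    have hb'd : β' * d = b' := Nat.div_mul_cancel hdvdb'
    have hβ : 0 < β := Nat.div_pos (Nat.le_of_dvd hb hdvdb) hdpos
    have hβ' : 0 < β' := Nat.div_pos (Nat.le_of_dvd hb' hdvdb') hdpos
    have hcop : Nat.Coprime β β' := by
      rw [hβdef, hβ'def, hd]
      exact Nat.coprime_div_gcd_div_gcd (hd ▸ hdpos)
    have hune : u ≠ 0 := by
      rw [hu, ← Units.val_pow_eq_pow_val]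
      exact (L ^ a).isUnit.ne_zero
    have hvne : v ≠ 0 := by
      rw [hv, ← Units.val_pow_eq_pow_val]
      exact (L ^ a').isUnit.ne_zero
    -- the exponent
    set e : ℤ := ((a' : ℤ) * b - (a : ℤ) * b') / (d : ℤ) with hedef
    have hbz : (b : ℤ) = (β : ℤ) * d := by exact_mod_cast hbd.symm
    have hb'z : (b' : ℤ) = (β' : ℤ) * d := by exact_mod_cast hb'd.symm
    have he : e = (a' : ℤ) * β - (a : ℤ) * β' := by
      rw [hedef, hbz, hb'z,
        show (a' : ℤ) * ((β : ℤ) * d) - (a : ℤ) * ((β' : ℤ) * d)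
          = ((a' : ℤ) * β - (a : ℤ) * β') * d by ring]
      exact Int.mul_ediv_cancel _ (by exact_mod_cast hdpos.ne')
    -- the key unit identity
    have hunit : ((L ^ e : Aˣ) : A) * u ^ β' = v ^ β := by
      have h1 : (L ^ e) * (L ^ (a * β' : ℕ)) = L ^ (a' * β : ℕ) := by
        rw [← zpow_natCast L (a * β'), ← zpow_natCast L (a' * β), ← zpow_add, he]
        congr 1
        push_cast
        ring
      have h2 := congrArg (Units.val) h1
      rw [Units.val_mul] at h2
      rw [hu, hv, ← pow_mul, ← pow_mul, ← Units.val_pow_eq_pow_val, ← Units.val_pow_eq_pow_val]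
      exact h2
    have key : _root_.resultant ((1 : A[X]) - C ((L : A) ^ a) * X ^ b)
        ((1 : A[X]) - C ((L : A) ^ a') * X ^ b')
        = (-1) ^ b' * ((L ^ (a * b') : Aˣ) : A) * ((1 : A) - ((L ^ e : Aˣ) : A)) ^ d := by
      rw [res_eq_sylBig u v hune hvne b b' hb hb', ← hbd, ← hb'd, det_sylBig u v β β' d hdpos,
        det_sylBlock u v β β' hβ hβ' hcop]
      have hblock : (-u) ^ β' - (-1) ^ β' * v ^ β
          = (-1) ^ β' * u ^ β' * ((1 : A) - ((L ^ e : Aˣ) : A)) := by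
        rw [neg_pow u β']
        have h2 : u ^ β' * ((L ^ e : Aˣ) : A) = v ^ β := by
          rw [mul_comm]; exact hunit
        linear_combination (-(1 : A)) ^ β' * h2
      rw [hblock, mul_pow, mul_pow, ← pow_mul, ← pow_mul, hb'd, hu, ← pow_mul,
        ← Units.val_pow_eq_pow_val]
    refine ⟨by rw [key], fun hne hm => ?_⟩
    rw [key]
    have hene : e ≠ 0 := by
      intro h0
      rw [he, sub_eq_zero] at h0
      apply hne
      rw [hbz, hb'z, ← mul_assoc, ← mul_assoc, h0]
    exact ((isUnit_one.neg.pow b').mul (L ^ (a * b')).isUnit).mul ((hm e hene).pow d)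
end

section
/- Let Z(T) = Σ_{n≥0} c_n T^n ∈ ℤ[[T]] be a power series, and suppose there exist positive integers a₁,…,a_r, b₁,…,b_r and nonnegative integers d₁,…,d_r, and a polynomial Q ∈ ℚ(L)[T] evaluated at a real number L > 1, such that Z(T)·∏_{i=1}^r (1 − L^{a_i} T^{b_i})^{d_i} is a polynomial. If no two pairs (a_i,b_i), (a_j,b_j) are proportional, then Z admits a partial fraction decomposition Z(T) = Q₀(T) + Σ_{i=1}^r Σ_{j=1}^{d_i} Q_{i,j}(T)/(1 − L^{a_i} T^{b_i})^j with deg Q_{i,j} ≤ b_i − 1, and consequently for all n larger than deg Q₀, c_n = Σ_{i=1}^r Σ_{j=1}^{d_i} binom(j + ⌊n/b_i⌋ − 1, j−1) · q_{i,j,n mod b_i} · L^{a_i ⌊n/b_i⌋}, where Q_{i,j}(T) = Σ_{m=0}^{b_i−1} q_{i,j,m} T^m. -/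
set_option autoImplicit false
open PowerSeries Polynomial Finset

noncomputable def Ginv (c : ℝ) (b j : ℕ) : PowerSeries ℝ :=
  PowerSeries.mk fun n => if b ∣ n then (Nat.choose (j + n / b) j : ℝ) * c ^ (n / b) else 0

lemma onesub_constCoeff (c : ℝ) {b : ℕ} (hb : 0 < b) :
    PowerSeries.constantCoeff ((1 : PowerSeries ℝ) - PowerSeries.C c * PowerSeries.X ^ b) = 1 := by
  have : (PowerSeries.constantCoeff) (PowerSeries.X ^ b : PowerSeries ℝ) = 0 := by
    rw [← PowerSeries.coeff_zero_eq_constantCoeff_apply, PowerSeries.coeff_X_pow]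
    simp [Nat.pos_iff_ne_zero.mp hb, (Nat.pos_iff_ne_zero.mp hb).symm]
  simp [this]

lemma coeff_onesub_mul (c : ℝ) (b : ℕ) (f : PowerSeries ℝ) (n : ℕ) :
    PowerSeries.coeff n (((1 : PowerSeries ℝ) - PowerSeries.C c * PowerSeries.X ^ b) * f)
      = PowerSeries.coeff n f - c * (if b ≤ n then PowerSeries.coeff (n - b) f else 0) := by
  rw [sub_mul, one_mul, map_sub, mul_assoc, PowerSeries.coeff_C_mul,
    PowerSeries.coeff_X_pow_mul' f b n]

lemma onesub_mul_Ginv_zero (c : ℝ) {b : ℕ} (hb : 0 < b) :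
    ((1 : PowerSeries ℝ) - PowerSeries.C c * PowerSeries.X ^ b) * Ginv c b 0 = 1 := by
  ext n
  rw [coeff_onesub_mul]
  simp only [Ginv, PowerSeries.coeff_mk, PowerSeries.coeff_one]
  by_cases hdvd : b ∣ n
  · rcases hdvd with ⟨m, rfl⟩
    rcases Nat.eq_zero_or_pos m with rfl | hm
    · simp [hb.ne']
    · have hble : b ≤ b * m := Nat.le_mul_of_pos_right _ hm
      have hsub : b * m - b = b * (m - 1) := by
        cases m with
        | zero => omega
        | succ k => simp [Nat.mul_succ]
      have hne : b * m ≠ 0 := by positivity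
      rw [if_pos hble, hsub, if_pos (Dvd.intro _ rfl), if_pos (Dvd.intro _ rfl), if_neg hne]
      rw [Nat.mul_div_cancel_left _ hb, Nat.mul_div_cancel_left _ hb]
      have : c ^ m = c * c ^ (m - 1) := by
        rw [← pow_succ']
        congr 1
        omega
      simp [this]
  · have hn0 : n ≠ 0 := by rintro rfl; exact hdvd (dvd_zero b)
    have hnd : ¬ b ∣ (n - b) ∨ ¬ b ≤ n := by
      by_cases hle : b ≤ n
      · exact Or.inl fun ⟨k, hk⟩ => hdvd ⟨k + 1, by rw [Nat.mul_succ]; omega⟩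
      · exact Or.inr hle
    rw [if_neg hdvd, if_neg hn0]
    split_ifs with h1 h2
    · exact absurd h2 (hnd.resolve_right (not_not_intro h1))
    · ring
    · ring

lemma onesub_mul_Ginv_succ (c : ℝ) {b : ℕ} (hb : 0 < b) (j : ℕ) :
    ((1 : PowerSeries ℝ) - PowerSeries.C c * PowerSeries.X ^ b) * Ginv c b (j + 1)
      = Ginv c b j := by
  ext n
  rw [coeff_onesub_mul]
  simp only [Ginv, PowerSeries.coeff_mk]
  by_cases hdvd : b ∣ n
  · rcases hdvd with ⟨m, rfl⟩
    rcases Nat.eq_zero_or_pos m with rfl | hm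
    · simp [hb.ne']
    · have hble : b ≤ b * m := Nat.le_mul_of_pos_right _ hm
      have hsub : b * m - b = b * (m - 1) := by
        cases m with
        | zero => omega
        | succ k => simp [Nat.mul_succ]
      rw [if_pos hble, hsub, if_pos (Dvd.intro _ rfl), if_pos (Dvd.intro _ rfl),
        if_pos (Dvd.intro _ rfl)]
      rw [Nat.mul_div_cancel_left _ hb, Nat.mul_div_cancel_left _ hb]
      have h1 : j + 1 + m = (j + m) + 1 := by omega
      have h2 : j + 1 + (m - 1) = j + m := by omega
      rw [h1, h2, Nat.choose_succ_succ]
      have : c ^ m = c * c ^ (m - 1) := by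
        rw [← pow_succ']
        congr 1
        omega
      push_cast
      rw [this]
      ring
  · have hnd : ¬ b ∣ (n - b) ∨ ¬ b ≤ n := by
      by_cases hle : b ≤ n
      · exact Or.inl fun ⟨k, hk⟩ => hdvd ⟨k + 1, by rw [Nat.mul_succ]; omega⟩
      · exact Or.inr hle
    rw [if_neg hdvd, if_neg hdvd]
    split_ifs with h1 h2
    · exact absurd h2 (hnd.resolve_right (not_not_intro h1))
    · ring
    · ring

lemma Ginv_mul (c : ℝ) {b : ℕ} (hb : 0 < b) (j : ℕ) :
    ((1 : PowerSeries ℝ) - PowerSeries.C c * PowerSeries.X ^ b) ^ (j + 1) * Ginv c b j = 1 := by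
  induction j with
  | zero => rw [pow_one]; exact onesub_mul_Ginv_zero c hb
  | succ j ih =>
      have : ((1 : PowerSeries ℝ) - PowerSeries.C c * PowerSeries.X ^ b) ^ (j + 1 + 1)
            * Ginv c b (j + 1)
          = ((1 : PowerSeries ℝ) - PowerSeries.C c * PowerSeries.X ^ b) ^ (j + 1)
            * (((1 : PowerSeries ℝ) - PowerSeries.C c * PowerSeries.X ^ b)
              * Ginv c b (j + 1)) := by ring
      rw [this, onesub_mul_Ginv_succ c hb j, ih]

lemma inv_pow_eq_Ginv (c : ℝ) {b : ℕ} (hb : 0 < b) (j : ℕ) :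
    ((((1 : PowerSeries ℝ) - PowerSeries.C c * PowerSeries.X ^ b)) ^ (j + 1))⁻¹
      = Ginv c b j := by
  rw [PowerSeries.inv_eq_iff_mul_eq_one, mul_comm]
  · exact Ginv_mul c hb j
  · rw [map_pow, onesub_constCoeff c hb, one_pow]
    exact one_ne_zero

lemma coeff_poly_mul_Ginv (c : ℝ) {b : ℕ} (hb : 0 < b) (j : ℕ) (q : Polynomial ℝ)
    (hq : q.degree < ((b : ℕ) : WithBot ℕ)) (n : ℕ) :
    PowerSeries.coeff n ((q : PowerSeries ℝ) * Ginv c b j)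
      = (Nat.choose (j + n / b) j : ℝ) * q.coeff (n % b) * c ^ (n / b) := by
  have hmd : n % b + b * (n / b) = n := Nat.mod_add_div n b
  have hsub : n - n % b = b * (n / b) := by omega
  rw [PowerSeries.coeff_mul]
  rw [Finset.sum_eq_single_of_mem (n % b, n - n % b)
      (Finset.HasAntidiagonal.mem_antidiagonal.mpr (by omega))]
  · rw [Polynomial.coeff_coe]
    simp only [Ginv, PowerSeries.coeff_mk, hsub]
    rw [if_pos (Dvd.intro _ rfl), Nat.mul_div_cancel_left _ hb]
    ring
  · rintro ⟨x, y⟩ hxy hne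
    have hxy' : x + y = n := Finset.HasAntidiagonal.mem_antidiagonal.mp hxy
    simp only [Ginv, PowerSeries.coeff_mk, Polynomial.coeff_coe]
    by_cases hdvd : b ∣ y
    · rcases hdvd with ⟨k, rfl⟩
      by_cases hxb : x < b
      · exfalso
        have hx : x = n % b := by
          have h1 := Nat.add_mul_mod_self_left x b k
          rw [hxy'] at h1
          have h2 := Nat.mod_eq_of_lt hxb
          omega
        exact hne (by rw [hx] at hxy' ⊢; rw [show b * k = n - n % b by omega])
      · have : q.coeff x = 0 := by
          apply Polynomial.coeff_eq_zero_of_degree_lt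
          refine lt_of_lt_of_le hq ?_
          exact_mod_cast Nat.le_of_not_lt hxb
        rw [this, zero_mul]
    · rw [if_neg hdvd, mul_zero]

lemma expandA (c : ℝ) (hc : c ≠ 0) {b : ℕ} (hb : 0 < b) (d : ℕ) (f : Polynomial ℝ) :
    ∃ (q : Polynomial ℝ) (s : Fin d → Polynomial ℝ),
      (∀ j, (s j).degree < ((b : ℕ) : WithBot ℕ)) ∧
      (f : PowerSeries ℝ) *
          (((1 : PowerSeries ℝ) - PowerSeries.C c * PowerSeries.X ^ b) ^ d)⁻¹
        = (q : PowerSeries ℝ) + ∑ j : Fin d, ((s j : PowerSeries ℝ) *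
            (((1 : PowerSeries ℝ) - PowerSeries.C c * PowerSeries.X ^ b) ^ ((j : ℕ) + 1))⁻¹) := by
  induction d generalizing f with
  | zero =>
      refine ⟨f, Fin.elim0, fun j => j.elim0, ?_⟩
      simp
  | succ d ih =>
      set hps : PowerSeries ℝ := (1 : PowerSeries ℝ) - PowerSeries.C c * PowerSeries.X ^ b
        with hps_def
      have hc0 : PowerSeries.constantCoeff hps ≠ 0 := by
        rw [hps_def, onesub_constCoeff c hb]; exact one_ne_zero
      set hm : Polynomial ℝ := Polynomial.X ^ b - Polynomial.C c⁻¹ with hm_def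
      have hmonic : hm.Monic := Polynomial.monic_X_pow_sub_C c⁻¹ hb.ne'
      have hdeg_hm : hm.degree = (b : WithBot ℕ) := Polynomial.degree_X_pow_sub_C hb c⁻¹
      have hrem : (f %ₘ hm).degree < ((b : ℕ) : WithBot ℕ) := by
        rw [← hdeg_hm]
        exact Polynomial.degree_modByMonic_lt f hmonic
      have hmrel : hm = Polynomial.C (-c⁻¹) * (1 - Polynomial.C c * Polynomial.X ^ b) := by
        have h1 : Polynomial.C (-c⁻¹) * Polynomial.C c = -1 := by
          rw [← Polynomial.C_mul]
          simp [neg_mul, inv_mul_cancel₀ hc]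
        rw [mul_sub, mul_one, ← mul_assoc, h1, hm_def, map_neg]
        ring
      have hps_poly : (((1 : Polynomial ℝ) - Polynomial.C c * Polynomial.X ^ b : Polynomial ℝ) :
          PowerSeries ℝ) = hps := by
        rw [Polynomial.coe_sub, Polynomial.coe_one, Polynomial.coe_mul, Polynomial.coe_C,
          Polynomial.coe_pow, Polynomial.coe_X, hps_def]
      have hmps : (hm : PowerSeries ℝ) = PowerSeries.C (-c⁻¹) * hps := by
        rw [hmrel, Polynomial.coe_mul, Polynomial.coe_C, hps_poly]
      have hkey : (hm : PowerSeries ℝ) * ((hps ^ (d + 1))⁻¹)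
          = PowerSeries.C (-c⁻¹) * (hps ^ d)⁻¹ := by
        have hcancel : hps * hps⁻¹ = 1 := PowerSeries.mul_inv_cancel hps hc0
        calc (hm : PowerSeries ℝ) * ((hps ^ (d + 1))⁻¹)
            = PowerSeries.C (-c⁻¹) * ((hps * hps⁻¹) * (hps ^ d)⁻¹) := by
              rw [hmps, pow_succ, PowerSeries.mul_inv_rev]; ring
          _ = PowerSeries.C (-c⁻¹) * (hps ^ d)⁻¹ := by rw [hcancel, one_mul]
      obtain ⟨q, s, hdeg, heq⟩ := ih (Polynomial.C (-c⁻¹) * (f /ₘ hm))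
      refine ⟨q, Fin.snoc s (f %ₘ hm), ?_, ?_⟩
      · intro j
        refine Fin.lastCases ?_ (fun j => ?_) j
        · rw [Fin.snoc_last]; exact hrem
        · rw [Fin.snoc_castSucc]; exact hdeg j
      · have hf : f = f %ₘ hm + hm * (f /ₘ hm) := (Polynomial.modByMonic_add_div f hm).symm
        calc (f : PowerSeries ℝ) * (hps ^ (d + 1))⁻¹
            = ((f %ₘ hm : Polynomial ℝ) : PowerSeries ℝ) * (hps ^ (d + 1))⁻¹
              + ((hm : PowerSeries ℝ) * (hps ^ (d + 1))⁻¹) *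
                ((f /ₘ hm : Polynomial ℝ) : PowerSeries ℝ) := by
              nth_rewrite 1 [hf]
              rw [Polynomial.coe_add, Polynomial.coe_mul]
              ring
          _ = ((Polynomial.C (-c⁻¹) * (f /ₘ hm) : Polynomial ℝ) : PowerSeries ℝ) * (hps ^ d)⁻¹
              + ((f %ₘ hm : Polynomial ℝ) : PowerSeries ℝ) * (hps ^ (d + 1))⁻¹ := by
              rw [hkey, Polynomial.coe_mul, Polynomial.coe_C]
              ring
          _ = (q : PowerSeries ℝ) + ∑ j : Fin (d + 1),
                (((Fin.snoc s (f %ₘ hm) : Fin (d+1) → Polynomial ℝ) j : PowerSeries ℝ) *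
                  (hps ^ ((j : ℕ) + 1))⁻¹) := by
              rw [heq, Fin.sum_univ_castSucc]
              simp only [Fin.snoc_castSucc, Fin.snoc_last, Fin.coe_castSucc, Fin.val_last]
              ring

lemma coprime_onesub {c₁ c₂ : ℝ} (b₁ b₂ : ℕ) (he : c₂ ^ b₁ - c₁ ^ b₂ ≠ 0) :
    IsCoprime ((1 : Polynomial ℝ) - Polynomial.C c₁ * Polynomial.X ^ b₁)
      ((1 : Polynomial ℝ) - Polynomial.C c₂ * Polynomial.X ^ b₂) := by
  set e : ℝ := c₂ ^ b₁ - c₁ ^ b₂ with he_def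
  have g1 : ((1 : Polynomial ℝ) - Polynomial.C c₁ * Polynomial.X ^ b₁) *
      (∑ m ∈ Finset.range b₂, (Polynomial.C c₁ * Polynomial.X ^ b₁) ^ m)
      = 1 - Polynomial.C (c₁ ^ b₂) * Polynomial.X ^ (b₁ * b₂) := by
    have h := geom_sum_mul (Polynomial.C c₁ * Polynomial.X ^ b₁) b₂
    have hx : (Polynomial.C c₁ * Polynomial.X ^ b₁) ^ b₂
        = Polynomial.C (c₁ ^ b₂) * Polynomial.X ^ (b₁ * b₂) := by
      rw [mul_pow, ← Polynomial.C_pow, ← pow_mul]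
    linear_combination -h - hx
  have g2 : ((1 : Polynomial ℝ) - Polynomial.C c₂ * Polynomial.X ^ b₂) *
      (∑ m ∈ Finset.range b₁, (Polynomial.C c₂ * Polynomial.X ^ b₂) ^ m)
      = 1 - Polynomial.C (c₂ ^ b₁) * Polynomial.X ^ (b₁ * b₂) := by
    have h := geom_sum_mul (Polynomial.C c₂ * Polynomial.X ^ b₂) b₁
    have hx : (Polynomial.C c₂ * Polynomial.X ^ b₂) ^ b₁
        = Polynomial.C (c₂ ^ b₁) * Polynomial.X ^ (b₁ * b₂) := by
      rw [mul_pow, ← Polynomial.C_pow, ← pow_mul, mul_comm b₂ b₁]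
    linear_combination -h - hx
  have hE : Polynomial.C e⁻¹ * (Polynomial.C (c₂ ^ b₁) - Polynomial.C (c₁ ^ b₂))
      = (1 : Polynomial ℝ) := by
    rw [← map_sub, ← map_mul, ← he_def, inv_mul_cancel₀ he, map_one]
  refine ⟨Polynomial.C e⁻¹ * Polynomial.C (c₂ ^ b₁) *
      (∑ m ∈ Finset.range b₂, (Polynomial.C c₁ * Polynomial.X ^ b₁) ^ m),
    -(Polynomial.C e⁻¹ * Polynomial.C (c₁ ^ b₂) *
      (∑ m ∈ Finset.range b₁, (Polynomial.C c₂ * Polynomial.X ^ b₂) ^ m)), ?_⟩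
  linear_combination (Polynomial.C e⁻¹ * Polynomial.C (c₂ ^ b₁)) * g1
    - (Polynomial.C e⁻¹ * Polynomial.C (c₁ ^ b₂)) * g2 + hE

lemma expandB {r : ℕ} (H : Fin r → Polynomial ℝ)
    (h0 : ∀ i, PowerSeries.constantCoeff (H i : PowerSeries ℝ) ≠ 0)
    (hcop : ∀ i k, i ≠ k → IsCoprime (H i) (H k)) (s : Finset (Fin r)) :
    ∀ (f : Polynomial ℝ),
      ∃ (q : Polynomial ℝ) (g : Fin r → Polynomial ℝ),
        (f : PowerSeries ℝ) * (∏ i ∈ s, (H i : PowerSeries ℝ))⁻¹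
          = (q : PowerSeries ℝ) + ∑ i ∈ s, ((g i : PowerSeries ℝ) *
              ((H i : PowerSeries ℝ))⁻¹) := by
  induction s using Finset.induction_on with
  | empty => intro f; exact ⟨f, fun _ => 0, by simp⟩
  | @insert a s ha ih =>
      intro f
      set Pps : PowerSeries ℝ := ∏ i ∈ s, (H i : PowerSeries ℝ) with hPps
      have hP0 : PowerSeries.constantCoeff Pps ≠ 0 := by
        rw [hPps, map_prod]
        exact Finset.prod_ne_zero_iff.mpr fun i _ => h0 i
      have hcp : IsCoprime (H a) (∏ i ∈ s, H i) :=
        IsCoprime.prod_right fun i hi => hcop a i (by rintro rfl; exact ha hi)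
      obtain ⟨u, v, huv⟩ := hcp
      have coe_prod : ((∏ i ∈ s, H i : Polynomial ℝ) : PowerSeries ℝ) = Pps := by
        rw [← Polynomial.coeToPowerSeries.ringHom_apply, map_prod, hPps]
        simp [Polynomial.coeToPowerSeries.ringHom_apply]
      have hPS : (u : PowerSeries ℝ) * (H a : PowerSeries ℝ)
          + (v : PowerSeries ℝ) * Pps = 1 := by
        rw [← coe_prod, ← Polynomial.coe_mul, ← Polynomial.coe_mul, ← Polynomial.coe_add, huv,
          Polynomial.coe_one]
      have hca : (H a : PowerSeries ℝ) * ((H a : PowerSeries ℝ))⁻¹ = 1 :=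
        PowerSeries.mul_inv_cancel _ (h0 a)
      have hcP : Pps * Pps⁻¹ = 1 := PowerSeries.mul_inv_cancel _ hP0
      obtain ⟨q, g, hg⟩ := ih (f * u)
      refine ⟨q, Function.update g a (f * v), ?_⟩
      rw [Finset.prod_insert ha, Finset.sum_insert ha, Function.update_self]
      have hsum : ∑ i ∈ s, ((Function.update g a (f * v) i : PowerSeries ℝ) *
            ((H i : PowerSeries ℝ))⁻¹)
          = ∑ i ∈ s, ((g i : PowerSeries ℝ) * ((H i : PowerSeries ℝ))⁻¹) :=
        Finset.sum_congr rfl fun i hi => by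
          rw [Function.update_of_ne (by rintro rfl; exact ha hi)]
      rw [hsum]
      have key : (f : PowerSeries ℝ) * ((H a : PowerSeries ℝ) * Pps)⁻¹
          = ((f * u : Polynomial ℝ) : PowerSeries ℝ) * Pps⁻¹
            + ((f * v : Polynomial ℝ) : PowerSeries ℝ) * ((H a : PowerSeries ℝ))⁻¹ := by
        calc (f : PowerSeries ℝ) * ((H a : PowerSeries ℝ) * Pps)⁻¹
            = ((f : PowerSeries ℝ) * ((u : PowerSeries ℝ) * (H a : PowerSeries ℝ)
                + (v : PowerSeries ℝ) * Pps)) * (Pps⁻¹ * ((H a : PowerSeries ℝ))⁻¹) := by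
              rw [hPS, mul_one, PowerSeries.mul_inv_rev]
          _ = ((f : PowerSeries ℝ) * (u : PowerSeries ℝ)) * Pps⁻¹
                * ((H a : PowerSeries ℝ) * ((H a : PowerSeries ℝ))⁻¹)
              + ((f : PowerSeries ℝ) * (v : PowerSeries ℝ)) * ((H a : PowerSeries ℝ))⁻¹
                * (Pps * Pps⁻¹) := by ring
          _ = _ := by
              rw [hca, hcP, mul_one, mul_one, Polynomial.coe_mul, Polynomial.coe_mul]
      rw [key, hg]
      ring

/-- Coefficient extraction from a rational power series with denominator
`∏ (1 − L^{a_i} T^{b_i})^{d_i}` (no two pairs `(a_i,b_i)` proportional):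
partial fraction decomposition `Z = Q₀ + Σ_{i,j} Q_{i,j}/(1 − L^{a_i}T^{b_i})^j` with
`deg Q_{i,j} ≤ b_i − 1`, and for `n > deg Q₀`,
`c_n = Σ_{i,j} binom(j + ⌊n/b_i⌋ − 1, j−1) q_{i,j,n mod b_i} L^{a_i ⌊n/b_i⌋}`. -/
theorem stmt_9 (Z : PowerSeries ℤ) (L : ℝ) (hL : 1 < L) (r : ℕ)
    (a b d : Fin r → ℕ) (ha : ∀ i, 0 < a i) (hb : ∀ i, 0 < b i)
    (hprop : ∀ i j, i ≠ j → a i * b j ≠ a j * b i)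
    (hpoly : ∃ P : Polynomial ℝ,
      (PowerSeries.map (Int.castRingHom ℝ) Z) *
          ∏ i, ((1 : PowerSeries ℝ) - PowerSeries.C (L ^ a i) * PowerSeries.X ^ b i) ^ d i
        = (P : PowerSeries ℝ)) :
    ∃ (Q₀ : Polynomial ℝ) (Q : (i : Fin r) → Fin (d i) → Polynomial ℝ),
      (∀ (i : Fin r) (j : Fin (d i)), (Q i j).degree < ((b i : ℕ) : WithBot ℕ)) ∧
      (PowerSeries.map (Int.castRingHom ℝ) Z
        = (Q₀ : PowerSeries ℝ) +
          ∑ i, ∑ j : Fin (d i),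
            ((Q i j : PowerSeries ℝ) *
              (((1 : PowerSeries ℝ) - PowerSeries.C (L ^ a i) * PowerSeries.X ^ b i)
                  ^ ((j : ℕ) + 1))⁻¹)) ∧
      (∀ n : ℕ, Q₀.natDegree < n →
        ((PowerSeries.coeff n Z : ℤ) : ℝ)
          = ∑ i, ∑ j : Fin (d i),
              (Nat.choose ((j : ℕ) + n / b i) (j : ℕ) : ℝ) *
                (Q i j).coeff (n % b i) * L ^ (a i * (n / b i))) := by
  obtain ⟨P, hP⟩ := hpoly
  have hL0 : (0 : ℝ) < L := lt_trans one_pos hL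
  set c : Fin r → ℝ := fun i => L ^ a i with hc_def
  have hcne : ∀ i, c i ≠ 0 := fun i => (pow_pos hL0 _).ne'
  set hps : Fin r → PowerSeries ℝ :=
    fun i => (1 : PowerSeries ℝ) - PowerSeries.C (c i) * PowerSeries.X ^ b i with hps_def
  set H : Fin r → Polynomial ℝ :=
    fun i => ((1 : Polynomial ℝ) - Polynomial.C (c i) * Polynomial.X ^ b i) ^ d i with hH_def
  have coe_H : ∀ i, ((H i : Polynomial ℝ) : PowerSeries ℝ) = (hps i) ^ d i := by
    intro i
    rw [hH_def, Polynomial.coe_pow, Polynomial.coe_sub, Polynomial.coe_one, Polynomial.coe_mul,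
      Polynomial.coe_C, Polynomial.coe_pow, Polynomial.coe_X, hps_def]
  have h0 : ∀ i, PowerSeries.constantCoeff (H i : PowerSeries ℝ) ≠ 0 := by
    intro i
    rw [coe_H i, map_pow, hps_def, onesub_constCoeff (c i) (hb i), one_pow]
    exact one_ne_zero
  have hcop : ∀ i k, i ≠ k → IsCoprime (H i) (H k) := by
    intro i k hik
    refine IsCoprime.pow (coprime_onesub (b i) (b k) ?_)
    refine sub_ne_zero.mpr ?_
    rw [hc_def, ← pow_mul, ← pow_mul]
    intro hEq
    exact hprop k i (fun h => hik h.symm)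
      ((pow_right_strictMono₀ hL).injective hEq)
  have hprod_cc : PowerSeries.constantCoeff (∏ i, (hps i) ^ d i) ≠ 0 := by
    rw [map_prod]
    refine Finset.prod_ne_zero_iff.mpr fun i _ => ?_
    rw [map_pow, hps_def, onesub_constCoeff (c i) (hb i), one_pow]
    exact one_ne_zero
  have hZ : PowerSeries.map (Int.castRingHom ℝ) Z
      = (P : PowerSeries ℝ) * (∏ i, (hps i) ^ d i)⁻¹ := by
    rw [PowerSeries.eq_mul_inv_iff_mul_eq hprod_cc]
    exact hP
  obtain ⟨q, g, hg⟩ := expandB H h0 hcop Finset.univ P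
  have hg' : PowerSeries.map (Int.castRingHom ℝ) Z
      = (q : PowerSeries ℝ) + ∑ i, ((g i : PowerSeries ℝ) * ((hps i ^ d i)⁻¹)) := by
    rw [hZ]
    have : ∏ i, ((H i : Polynomial ℝ) : PowerSeries ℝ) = ∏ i, (hps i) ^ d i :=
      Finset.prod_congr rfl fun i _ => coe_H i
    rw [← this, hg]
    congr 1
    exact Finset.sum_congr rfl fun i _ => by rw [coe_H i]
  choose qi s hdeg heq using fun i => expandA (c i) (hcne i) (hb i) (d i) (g i)
  have hcoe_sum : ((∑ i, qi i : Polynomial ℝ) : PowerSeries ℝ)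
      = ∑ i, ((qi i : Polynomial ℝ) : PowerSeries ℝ) := by
    rw [← Polynomial.coeToPowerSeries.ringHom_apply, map_sum]
    exact Finset.sum_congr rfl fun i _ => Polynomial.coeToPowerSeries.ringHom_apply
  have hdec : PowerSeries.map (Int.castRingHom ℝ) Z
      = ((q + ∑ i, qi i : Polynomial ℝ) : PowerSeries ℝ) +
        ∑ i, ∑ j : Fin (d i),
          ((s i j : PowerSeries ℝ) * ((hps i ^ ((j : ℕ) + 1))⁻¹)) := by
    rw [hg', Finset.sum_congr rfl fun i (_ : i ∈ Finset.univ) => heq i,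
      Finset.sum_add_distrib, Polynomial.coe_add, hcoe_sum]
    ring
  refine ⟨q + ∑ i, qi i, s, fun i j => hdeg i j, hdec, ?_⟩
  intro n hn
  have hL2 : ((PowerSeries.coeff n Z : ℤ) : ℝ)
      = PowerSeries.coeff n (PowerSeries.map (Int.castRingHom ℝ) Z) := by
    rw [PowerSeries.coeff_map]; simp
  rw [hL2, hdec, map_add, map_sum]
  have h1 : PowerSeries.coeff n ((q + ∑ i, qi i : Polynomial ℝ) : PowerSeries ℝ) = 0 := by
    rw [Polynomial.coeff_coe]
    exact Polynomial.coeff_eq_zero_of_natDegree_lt hn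
  rw [h1, zero_add]
  refine Finset.sum_congr rfl fun i _ => ?_
  rw [map_sum]
  refine Finset.sum_congr rfl fun j _ => ?_
  simp only [hps_def]
  rw [inv_pow_eq_Ginv (c i) (hb i) (j : ℕ),
    coeff_poly_mul_Ginv (c i) (hb i) (j : ℕ) (s i j) (hdeg i j) n]
  simp only [hc_def]
  rw [← pow_mul]
end

section
/- Let k be a finite field with nontrivial character ψ, K = k((t)), R = k[[t]], and r : K → k a nonzero k-linear map vanishing on t^{-a}R for some integer a; let ν be the conductor of r (the smallest such a). Define the Fourier transform of a Schwartz–Bruhat function φ on K by 𝓕φ(y) = ∫_K φ(x)ψ(r(xy)) dx with Haar measure vol(R) = 1. Then for every Schwartz–Bruhat function φ on K^n (with the pairing ⟨x,y⟩ = Σ x_j y_j and transform 𝓕φ(y) = ∫ φ(x)ψ(r(⟨x,y⟩))dx), one has 𝓕𝓕φ(x) = q^{−nν} φ(−x), where q = |k|. -/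
set_option autoImplicit false

open MeasureTheory

/-- The Fourier transform on `K^n`, `K = k((t))`:
`𝓕φ(y) = ∫ φ(x) ψ(r(⟨x,y⟩)) dx` with respect to the Haar measure `μ` on `K^n`. -/
noncomputable def fourierTransform (k : Type*) [Field k] (n : ℕ)
    [MeasurableSpace (Fin n → LaurentSeries k)]
    (μ : Measure (Fin n → LaurentSeries k))
    (ψ : AddChar k ℂ) (r : LaurentSeries k →ₗ[k] k)
    (φ : (Fin n → LaurentSeries k) → ℂ) :
    (Fin n → LaurentSeries k) → ℂ :=
  fun y => ∫ x, φ x * ψ (r (∑ i, x i * y i)) ∂μ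

set_option linter.unusedSectionVars false
set_option linter.unusedVariables false
open HahnSeries

namespace S16
variable {k : Type*} [Field k]

/-- membership in the ball `t^m R`: all coefficients below `m` vanish. -/
def inB (m : ℤ) (z : LaurentSeries k) : Prop := ∀ j : ℤ, j < m → z.coeff j = 0

lemma inB_zero (m : ℤ) : inB m (0 : LaurentSeries k) := fun _ _ => rfl

lemma inB_add {m : ℤ} {u v : LaurentSeries k} (hu : inB m u) (hv : inB m v) :
    inB m (u + v) := fun j hj => by
  simp [HahnSeries.coeff_add, hu j hj, hv j hj]

lemma inB_neg {m : ℤ} {u : LaurentSeries k} (hu : inB m u) : inB m (-u) := fun j hj => by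
  simp [hu j hj]

lemma inB_mono {m m' : ℤ} (h : m' ≤ m) {u : LaurentSeries k} (hu : inB m u) : inB m' u :=
  fun j hj => hu j (lt_of_lt_of_le hj h)

lemma inB_iff_order {m : ℤ} {z : LaurentSeries k} :
    inB m z ↔ z = 0 ∨ m ≤ z.order := by
  constructor
  · intro h
    by_cases hz : z = 0
    · exact Or.inl hz
    · refine Or.inr ?_
      by_contra hlt
      exact (mt HahnSeries.coeff_order_eq_zero.mp hz) (h _ (not_le.mp hlt))
  · rintro (rfl | h) j hj
    · rfl
    · exact HahnSeries.coeff_eq_zero_of_lt_order (lt_of_lt_of_le hj h)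

lemma inB_mul {a b : ℤ} {u v : LaurentSeries k} (hu : inB a u) (hv : inB b v) :
    inB (a + b) (u * v) := by
  rcases inB_iff_order.mp hu with rfl | hu'
  · simpa [zero_mul] using inB_zero (a + b)
  rcases inB_iff_order.mp hv with rfl | hv'
  · simpa [mul_zero] using inB_zero (a + b)
  rcases eq_or_ne u 0 with rfl | hu0
  · simpa [zero_mul] using inB_zero (a + b)
  rcases eq_or_ne v 0 with rfl | hv0
  · simpa [mul_zero] using inB_zero (a + b)
  refine inB_iff_order.mpr (Or.inr ?_)
  rw [HahnSeries.order_mul hu0 hv0]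
  exact add_le_add hu' hv'

lemma single_one_mul_coeff {b p : ℤ} {x : LaurentSeries k} :
    ((HahnSeries.single b (1:k) : LaurentSeries k) * x).coeff p = x.coeff (p - b) := by
  have : p = (p - b) + b := by ring
  rw [this, HahnSeries.coeff_single_mul_add, one_mul]
  ring_nf

lemma tpow (m : ℤ) :
    (HahnSeries.single (1:ℤ) (1:k) : LaurentSeries k) ^ m
      = HahnSeries.single m (1:k) := by
  have hnat : ∀ l : ℕ, (HahnSeries.single (1:ℤ) (1:k) : LaurentSeries k) ^ l
      = HahnSeries.single (l : ℤ) (1:k) := by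
    intro l
    induction l with
    | zero => simp [HahnSeries.single_zero_one]
    | succ l ih => rw [pow_succ, ih, HahnSeries.single_mul_single, one_mul]; push_cast; ring_nf
  rcases m with l | l
  · rw [Int.ofNat_eq_coe, zpow_natCast, hnat]
  · rw [zpow_negSucc, hnat]
    refine inv_eq_of_mul_eq_one_left ?_
    rw [HahnSeries.single_mul_single, one_mul]
    have : (Int.negSucc l) + (((l:ℕ) + 1 : ℕ) : ℤ) = 0 := by
      simp [Int.negSucc_eq]
    rw [this, HahnSeries.single_zero_one]

lemma exists_t_mul_iff {L : ℤ} {z : LaurentSeries k} :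
    (∃ y : LaurentSeries k, (∀ i' : ℤ, i' < 0 → y.coeff i' = 0) ∧
      z = (HahnSeries.single (1:ℤ) (1:k) : LaurentSeries k) ^ L * y) ↔ inB L z := by
  rw [tpow]
  constructor
  · rintro ⟨y, hy, rfl⟩ j hj
    rw [single_one_mul_coeff]
    exact hy _ (by omega)
  · intro h
    refine ⟨(HahnSeries.single (-L) (1:k) : LaurentSeries k) * z, ?_, ?_⟩
    · intro i' hi'
      rw [single_one_mul_coeff]
      exact h _ (by omega)
    · rw [← mul_assoc, HahnSeries.single_mul_single, one_mul, add_neg_cancel,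
        HahnSeries.single_zero_one, one_mul]


/-! ### representatives of cosets -/

variable (k) in
/-- The Laurent series with coefficients `σ` on the finite set `A`. -/
noncomputable def repF (A : Finset ℤ) (σ : {x // x ∈ A} → k) : LaurentSeries k :=
  ∑ j ∈ A.attach, HahnSeries.single (j : ℤ) (σ j)

lemma coeff_repF (A : Finset ℤ) (σ : {x // x ∈ A} → k) (e : ℤ) :
    (repF k A σ).coeff e = if h : e ∈ A then σ ⟨e, h⟩ else 0 := by
  classical
  have hext : ∀ j ∈ A.attach, (HahnSeries.single (j:ℤ) (σ j) : LaurentSeries k).coeff e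
      = (HahnSeries.single (j:ℤ) (if h : (j:ℤ) ∈ A then σ ⟨j, h⟩ else 0) : LaurentSeries k).coeff e := by
    intro j _
    congr 1
    simp [j.2]
  have hsum : (repF k A σ).coeff e
      = ∑ j ∈ A.attach, (HahnSeries.single (j:ℤ) (σ j) : LaurentSeries k).coeff e := by
    rw [repF]
    exact map_sum (HahnSeries.coeff.addMonoidHom e) _ _
  rw [hsum]
  rw [Finset.sum_congr rfl hext, Finset.sum_attach A
    (fun j => (HahnSeries.single j (if h : j ∈ A then σ ⟨j, h⟩ else 0) : LaurentSeries k).coeff e)]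
  rw [Finset.sum_eq_single e (fun b _ hb => by simp [HahnSeries.coeff_single_of_ne (Ne.symm hb)])
    (fun he => by simp [he])]
  by_cases h : e ∈ A <;> simp [h]

lemma inB_repF {m M L : ℤ} (hm : m ≤ M) (σ : {x // x ∈ Finset.Ico M L} → k) :
    inB m (repF k (Finset.Ico M L) σ) := by
  intro j hj
  rw [coeff_repF]
  have : ¬ j ∈ Finset.Ico M L := by simp; omega
  simp [this]


/-! ### balls in `K^n` -/

variable {n : ℕ}

/-- The ball of radius `t^m` around `c` in `K^n`. -/
def ball (c : Fin n → LaurentSeries k) (m : ℤ) : Set (Fin n → LaurentSeries k) :=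
  {x | ∀ i, inB m (x i - c i)}

variable (k) in
noncomputable def repV (M L : ℤ) (τ : Fin n → {x // x ∈ Finset.Ico M L} → k) :
    Fin n → LaurentSeries k :=
  fun i => repF k (Finset.Ico M L) (τ i)

def tblOf (M L : ℤ) (x : Fin n → LaurentSeries k) :
    Fin n → {j // j ∈ Finset.Ico M L} → k :=
  fun i j => (x i).coeff j

lemma mem_ball_self (c : Fin n → LaurentSeries k) (m : ℤ) : c ∈ ball c m :=
  fun i => by simpa using inB_zero m

lemma ball_eq_of_mem {c x : Fin n → LaurentSeries k} {m : ℤ} (h : x ∈ ball c m) :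
    ball c m = ball x m := by
  ext z
  constructor <;> intro hz i
  · have := inB_add (hz i) (inB_neg (h i))
    simpa [sub_add_sub_cancel'] using this
  · have := inB_add (hz i) (h i)
    simpa [sub_add_sub_cancel] using this

lemma inB_of_mem_ball {c x : Fin n → LaurentSeries k} {m M : ℤ} (hM : M ≤ m)
    (hc : ∀ i, inB M (c i)) (h : x ∈ ball c m) : ∀ i, inB M (x i) := by
  intro i
  have := inB_add (inB_mono hM (h i)) (hc i)
  simpa [sub_add_cancel] using this

lemma repV_inB (M L : ℤ) (τ : Fin n → {x // x ∈ Finset.Ico M L} → k)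
    {m : ℤ} (hm : m ≤ M) : ∀ i, inB m (repV k M L τ i) :=
  fun i => inB_repF hm (τ i)

lemma mem_ball_repV_tblOf {M L : ℤ} {x : Fin n → LaurentSeries k}
    (hx : ∀ i, inB M (x i)) : x ∈ ball (repV k M L (tblOf M L x)) L := by
  intro i j hj
  rw [HahnSeries.coeff_sub, repV, coeff_repF]
  by_cases h : j ∈ Finset.Ico M L
  · simp [tblOf, h]
  · have : j < M := by simp at h; omega
    simp [hx i j this, h]

lemma tbl_unique {M L : ℤ} {τ τ' : Fin n → {x // x ∈ Finset.Ico M L} → k}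
    {x : Fin n → LaurentSeries k}
    (h : x ∈ ball (repV k M L τ) L) (h' : x ∈ ball (repV k M L τ') L) : τ = τ' := by
  funext i j
  have hd : inB L (repV k M L τ i - repV k M L τ' i) := by
    have := inB_add (inB_neg (h i)) (h' i)
    simpa [neg_sub, sub_add_sub_cancel'] using this
  have hj : (j : ℤ) < L := (Finset.mem_Ico.mp j.2).2
  have := hd j hj
  rw [HahnSeries.coeff_sub, repV, repV, coeff_repF, coeff_repF] at this
  simpa [j.2, sub_eq_zero] using this

lemma ball_eq_sub {M L : ℤ} (hML : M ≤ L) {τ : Fin n → {x // x ∈ Finset.Ico M L} → k}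
    {x : Fin n → LaurentSeries k} (h : x ∈ ball (repV k M L τ) L) : ∀ i, inB M (x i) :=
  inB_of_mem_ball hML (repV_inB M L τ le_rfl) h

lemma ballSet_eq (c : Fin n → LaurentSeries k) (L : ℤ) :
    {x : Fin n → LaurentSeries k | ∀ i, ∃ y : LaurentSeries k,
        (∀ i' : ℤ, i' < 0 → y.coeff i' = 0) ∧
        x i = c i + (HahnSeries.single (1 : ℤ) (1 : k) : LaurentSeries k) ^ (L : ℤ) * y}
      = ball c L := by
  ext x
  refine forall_congr' fun i => ?_
  rw [← exists_t_mul_iff (L := L) (z := x i - c i)]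
  constructor
  · rintro ⟨y, hy, he⟩; exact ⟨y, hy, by rw [he]; ring⟩
  · rintro ⟨y, hy, he⟩; exact ⟨y, hy, by rw [← he]; ring⟩

/-! ### measure theory -/

section Measure

variable [Fintype k] [MeasurableSpace (Fin n → LaurentSeries k)]
  {μ : Measure (Fin n → LaurentSeries k)}

variable (μ) in
/-- The standing hypothesis on the measure. -/
def HMeas : Prop :=
  ∀ (c : Fin n → LaurentSeries k) (m : Fin n → ℤ),
      μ {x : Fin n → LaurentSeries k | ∀ i, ∃ y : LaurentSeries k,
          (∀ i' : ℤ, i' < 0 → y.coeff i' = 0) ∧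
          x i = c i + (HahnSeries.single (1 : ℤ) (1 : k) : LaurentSeries k) ^ (m i) * y}
        = ENNReal.ofReal (∏ i, (Fintype.card k : ℝ) ^ (-(m i)))

lemma measure_ball (hμ : HMeas μ) (c : Fin n → LaurentSeries k) (L : ℤ) :
    μ (ball c L) = ENNReal.ofReal (((Fintype.card k : ℝ) ^ (-L : ℤ)) ^ n) := by
  have := hμ c (fun _ => L)
  rw [ballSet_eq] at this
  rw [this, Finset.prod_const, Finset.card_univ, Fintype.card_fin]

lemma card_tbl (M L : ℤ) :
    (Fintype.card (Fin n → ({x // x ∈ Finset.Ico M L} → k)) : ℝ)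
      = ((Fintype.card k : ℝ) ^ (L - M).toNat) ^ n := by
  classical
  rw [Fintype.card_fun, Fintype.card_fun, Fintype.card_fin, Fintype.card_coe, Int.card_Ico]
  push_cast
  ring

lemma card_mul_measure (hq : (Fintype.card k : ℝ) ≠ 0) {M L : ℤ} (hML : M ≤ L) :
    (Fintype.card (Fin n → ({x // x ∈ Finset.Ico M L} → k)) : ℝ)
        * ((Fintype.card k : ℝ) ^ (-L : ℤ)) ^ n
      = ((Fintype.card k : ℝ) ^ (-M : ℤ)) ^ n := by
  rw [card_tbl, ← mul_pow]
  congr 1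
  rw [← zpow_natCast, ← zpow_add₀ hq]
  congr 1
  omega

lemma measure_ball_ne_top (hμ : HMeas μ) (c : Fin n → LaurentSeries k) (L : ℤ) :
    μ (ball c L) ≠ ⊤ := by
  rw [measure_ball hμ]
  exact ENNReal.ofReal_ne_top

/-- for every `c` there is some `m₀ ≤ L` with all components of `c` in `t^{m₀}R`. -/
lemma exists_inB (c : Fin n → LaurentSeries k) (L : ℤ) :
    ∃ m₀ : ℤ, m₀ ≤ L ∧ ∀ i, inB m₀ (c i) := by
  refine ⟨L - (∑ i, (L - (c i).order).toNat : ℕ), by omega, fun i => ?_⟩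
  rcases eq_or_ne (c i) 0 with h | h
  · rw [h]; exact inB_zero _
  · refine inB_iff_order.mpr (Or.inr ?_)
    have h1 : (L - (c i).order).toNat ≤ (∑ i, (L - (c i).order).toNat : ℕ) :=
      Finset.single_le_sum (f := fun i => (L - (c i).order).toNat)
        (fun _ _ => Nat.zero_le _) (Finset.mem_univ i)
    have h2 : L - (c i).order ≤ ((L - (c i).order).toNat : ℤ) := Int.self_le_toNat _
    omega

lemma pairwise_hull_null (hμ : HMeas μ) {L : ℤ} {c c' : Fin n → LaurentSeries k}
    (hne : ball c L ≠ ball c' L) :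
    μ (toMeasurable μ (ball c L) ∩ toMeasurable μ (ball c' L)) = 0 := by
  classical
  have hq : (0:ℝ) < (Fintype.card k : ℝ) := by positivity
  obtain ⟨m₁, hm₁L, hm₁⟩ := exists_inB c L
  obtain ⟨m₂, hm₂L, hm₂⟩ := exists_inB c' L
  set m₀ := min m₁ m₂ with hm₀
  have hm₀L : m₀ ≤ L := le_trans (min_le_left _ _) hm₁L
  have hc : ∀ i, inB m₀ (c i) := fun i => inB_mono (min_le_left _ _) (hm₁ i)
  have hc' : ∀ i, inB m₀ (c' i) := fun i => inB_mono (min_le_right _ _) (hm₂ i)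
  set T := Fin n → ({x // x ∈ Finset.Ico m₀ L} → k) with hT
  set F : T → Set (Fin n → LaurentSeries k) :=
    fun τ => toMeasurable μ (ball (repV k m₀ L τ) L) with hF
  -- the two balls are balls around representatives
  have hbc : ball c L = ball (repV k m₀ L (tblOf m₀ L c)) L :=
    (ball_eq_of_mem (mem_ball_repV_tblOf hc)).symm
  have hbc' : ball c' L = ball (repV k m₀ L (tblOf m₀ L c')) L :=
    (ball_eq_of_mem (mem_ball_repV_tblOf hc')).symm
  set a := tblOf m₀ L c
  set b := tblOf m₀ L c'
  have hab : a ≠ b := by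
    intro h
    exact hne (by rw [hbc, hbc', ← h])
  -- covering
  have hcover : ball (0 : Fin n → LaurentSeries k) m₀ ⊆ ⋃ τ : T, F τ := by
    intro x hx
    have hx' : ∀ i, inB m₀ (x i) := fun i => by simpa using hx i
    exact Set.mem_iUnion.mpr ⟨tblOf m₀ L x,
      subset_toMeasurable _ _ (mem_ball_repV_tblOf hx')⟩
  have hFμ : ∀ τ : T, μ (F τ) = ENNReal.ofReal (((Fintype.card k : ℝ) ^ (-L : ℤ)) ^ n) :=
    fun τ => by rw [hF, measure_toMeasurable, measure_ball hμ]
  have hFfin : ∀ τ : T, μ (F τ) ≠ ⊤ := fun τ => by rw [hFμ]; exact ENNReal.ofReal_ne_top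
  -- total measure identity
  have hsum : ∑ τ : T, μ (F τ) = μ (ball (0 : Fin n → LaurentSeries k) m₀) := by
    rw [measure_ball hμ]
    rw [Finset.sum_congr rfl (fun τ _ => hFμ τ), Finset.sum_const, Finset.card_univ, nsmul_eq_mul]
    rw [← ENNReal.ofReal_natCast, ← ENNReal.ofReal_mul (by positivity)]
    rw [card_mul_measure (ne_of_gt hq) hm₀L]
  have hle : μ (⋃ τ : T, F τ) ≤ ∑ τ : T, μ (F τ) := measure_iUnion_fintype_le _ _
  have hge : ∑ τ : T, μ (F τ) ≤ μ (⋃ τ : T, F τ) := hsum ▸ measure_mono hcover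
  have hUeq : μ (⋃ τ : T, F τ) = ∑ τ : T, μ (F τ) := le_antisymm hle hge
  -- split the sum
  have hsplit : ∑ τ : T, μ (F τ)
      = μ (F a) + μ (F b) + ∑ τ ∈ (Finset.univ.erase a).erase b, μ (F τ) := by
    rw [← Finset.add_sum_erase _ _ (Finset.mem_univ a),
      ← Finset.add_sum_erase _ _ (Finset.mem_erase.mpr ⟨Ne.symm hab, Finset.mem_univ b⟩)]
    ring
  have hcover2 : (⋃ τ : T, F τ) ⊆ (F a ∪ F b) ∪ ⋃ τ ∈ (Finset.univ.erase a).erase b, F τ := by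
    intro x hx
    obtain ⟨τ, hτ⟩ := Set.mem_iUnion.mp hx
    rcases eq_or_ne τ a with rfl | hτa
    · exact Or.inl (Or.inl hτ)
    rcases eq_or_ne τ b with rfl | hτb
    · exact Or.inl (Or.inr hτ)
    · exact Or.inr (Set.mem_biUnion (Finset.mem_erase.mpr ⟨hτb,
        Finset.mem_erase.mpr ⟨hτa, Finset.mem_univ τ⟩⟩) hτ)
  have hle2 : μ (⋃ τ : T, F τ)
      ≤ μ (F a ∪ F b) + ∑ τ ∈ (Finset.univ.erase a).erase b, μ (F τ) :=
    le_trans (measure_mono hcover2)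
      (le_trans (measure_union_le _ _)
        (add_le_add le_rfl (measure_biUnion_finset_le _ _)))
  have hinter : μ (F a ∪ F b) + μ (F a ∩ F b) = μ (F a) + μ (F b) :=
    measure_union_add_inter _ (measurableSet_toMeasurable _ _)
  -- cancellation
  have hXfin : μ (F a ∪ F b) + ∑ τ ∈ (Finset.univ.erase a).erase b, μ (F τ) ≠ ⊤ := by
    refine ENNReal.add_ne_top.mpr ⟨?_, ?_⟩
    · exact ne_top_of_le_ne_top (ENNReal.add_ne_top.mpr ⟨hFfin a, hFfin b⟩)
        (measure_union_le _ _)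
    · exact (ENNReal.sum_ne_top).mpr (fun τ _ => hFfin τ)
  have key : (μ (F a ∪ F b) + ∑ τ ∈ (Finset.univ.erase a).erase b, μ (F τ)) + μ (F a ∩ F b)
      ≤ (μ (F a ∪ F b) + ∑ τ ∈ (Finset.univ.erase a).erase b, μ (F τ)) + 0 := by
    rw [add_zero]
    calc (μ (F a ∪ F b) + ∑ τ ∈ (Finset.univ.erase a).erase b, μ (F τ)) + μ (F a ∩ F b)
        = (μ (F a ∪ F b) + μ (F a ∩ F b)) + ∑ τ ∈ (Finset.univ.erase a).erase b, μ (F τ) := by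
          ring
      _ = μ (F a) + μ (F b) + ∑ τ ∈ (Finset.univ.erase a).erase b, μ (F τ) := by rw [hinter]
      _ = μ (⋃ τ : T, F τ) := by rw [hUeq, hsplit]
      _ ≤ _ := hle2
  have h0 : μ (F a ∩ F b) = 0 :=
    le_antisymm (by exact_mod_cast (ENNReal.add_le_add_iff_left hXfin).mp key) (by positivity)
  rw [hbc, hbc']
  exact h0


lemma ball_nullMeasurable (hμ : HMeas μ) (c : Fin n → LaurentSeries k) (L : ℤ) :
    NullMeasurableSet (ball c L) μ := by
  classical
  obtain ⟨m₁, hm₁L, hm₁⟩ := exists_inB c L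
  set ι := Σ j : ℕ, (Fin n → ({x // x ∈ Finset.Ico (m₁ - j) L} → k)) with hι
  set G : ι → Set (Fin n → LaurentSeries k) := fun p =>
    if ball (repV k (m₁ - p.1) L p.2) L = ball c L then ∅
    else toMeasurable μ (ball c L) ∩ toMeasurable μ (ball (repV k (m₁ - p.1) L p.2) L) with hG
  have hGnull : ∀ p : ι, μ (G p) = 0 := by
    intro p
    rw [hG]
    simp only []
    split_ifs with h
    · simp
    · exact pairwise_hull_null hμ (Ne.symm h)
  have hcover : toMeasurable μ (ball c L) \ ball c L ⊆ ⋃ p : ι, G p := by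
    rintro x ⟨hx1, hx2⟩
    obtain ⟨m₂, hm₂L, hm₂⟩ := exists_inB x L
    set j : ℕ := (m₁ - m₂).toNat with hj
    have hmono : m₁ - (j : ℤ) ≤ m₂ := by
      have := Int.self_le_toNat (m₁ - m₂); omega
    have hx' : ∀ i, inB (m₁ - (j : ℤ)) (x i) := fun i => inB_mono hmono (hm₂ i)
    set τ := tblOf (m₁ - (j:ℤ)) L x with hτ
    have hxball : x ∈ ball (repV k (m₁ - (j:ℤ)) L τ) L := mem_ball_repV_tblOf hx'
    have hne : ¬ ball (repV k (m₁ - (j:ℤ)) L τ) L = ball c L := by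
      intro h
      exact hx2 (h ▸ hxball)
    refine Set.mem_iUnion.mpr ⟨⟨j, τ⟩, ?_⟩
    rw [hG]
    simp only [hne, if_false]

    exact ⟨hx1, subset_toMeasurable _ _ hxball⟩
  have hnull : μ (toMeasurable μ (ball c L) \ ball c L) = 0 :=
    measure_mono_null hcover (measure_iUnion_null hGnull)
  exact ⟨toMeasurable μ (ball c L), measurableSet_toMeasurable _ _,
    (MeasureTheory.ae_eq_set.mpr ⟨by simp [Set.diff_eq_empty.mpr (subset_toMeasurable _ _)], hnull⟩)⟩

/-- integral of a constant on a null-measurable set of finite measure -/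
lemma integral_indicator_nm {α : Type*} [MeasurableSpace α] {μ' : Measure α} {s : Set α}
    (hs : NullMeasurableSet s μ') (hfin : μ' s ≠ ⊤) (a : ℂ) :
    Integrable (s.indicator (fun _ => a)) μ' ∧
      ∫ x, s.indicator (fun _ => a) x ∂μ' = (μ' s).toReal • a := by
  have hae : toMeasurable μ' s =ᵐ[μ'] s := hs.toMeasurable_ae_eq
  have hind : (toMeasurable μ' s).indicator (fun _ => a)
      =ᵐ[μ'] s.indicator (fun _ => a) := indicator_ae_eq_of_ae_eq_set hae
  have hmeas : MeasurableSet (toMeasurable μ' s) := measurableSet_toMeasurable _ _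
  have hμt : μ' (toMeasurable μ' s) = μ' s := measure_toMeasurable s
  have hint : Integrable ((toMeasurable μ' s).indicator (fun _ => a)) μ' := by
    rw [integrable_indicator_iff hmeas]
    exact (integrableOn_const_iff (C := a)).mpr (Or.inr (lt_of_le_of_ne (le_top) (hμt ▸ hfin)))
  refine ⟨hint.congr hind, ?_⟩
  rw [← integral_congr_ae hind, integral_indicator_const a hmeas, measureReal_def, hμt]


lemma sum_indicator_eq {M L : ℤ} (hML : M ≤ L) (f : (Fin n → LaurentSeries k) → ℂ)
    (hfs : ∀ x, f x ≠ 0 → ∀ i, inB M (x i))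
    (hfi : ∀ x z, (∀ i, inB L (z i)) → f (x + z) = f x)
    (x : Fin n → LaurentSeries k) :
    f x = ∑ τ : Fin n → ({j // j ∈ Finset.Ico M L} → k),
      (ball (repV k M L τ) L).indicator (fun _ => f (repV k M L τ)) x := by
  classical
  by_cases hx : ∀ i, inB M (x i)
  · set τ₀ := tblOf M L x with hτ₀
    have hmem : x ∈ ball (repV k M L τ₀) L := mem_ball_repV_tblOf hx
    rw [Finset.sum_eq_single τ₀ ?_ (fun h => absurd (Finset.mem_univ τ₀) h)]
    · rw [Set.indicator_of_mem hmem]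
      have hz : ∀ i, inB L ((x - repV k M L τ₀) i) := fun i => hmem i
      have := hfi (repV k M L τ₀) (x - repV k M L τ₀) hz
      simpa using this
    · intro τ _ hτ
      rw [Set.indicator_of_notMem]
      intro hmem'
      exact hτ (tbl_unique hmem' hmem)
  · have hfx : f x = 0 := by
      by_contra h
      exact hx (hfs x h)
    rw [hfx]
    symm
    refine Finset.sum_eq_zero fun τ _ => ?_
    rw [Set.indicator_of_notMem]
    intro hmem
    exact hx (ball_eq_sub hML hmem)

lemma integral_eq_sum (hμ : HMeas μ) {M L : ℤ} (hML : M ≤ L)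
    (f : (Fin n → LaurentSeries k) → ℂ)
    (hfs : ∀ x, f x ≠ 0 → ∀ i, inB M (x i))
    (hfi : ∀ x z, (∀ i, inB L (z i)) → f (x + z) = f x) :
    ∫ x, f x ∂μ = (∑ τ : Fin n → ({j // j ∈ Finset.Ico M L} → k), f (repV k M L τ))
      * ((((Fintype.card k : ℝ) ^ (-L : ℤ)) ^ n : ℝ) : ℂ) := by
  classical
  have hpt : ∀ x, f x = ∑ τ : Fin n → ({j // j ∈ Finset.Ico M L} → k),
      (ball (repV k M L τ) L).indicator (fun _ => f (repV k M L τ)) x :=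
    sum_indicator_eq hML f hfs hfi
  rw [integral_congr_ae (Filter.EventuallyEq.of_eq (funext hpt))]
  rw [integral_finset_sum _ (fun τ _ =>
    (integral_indicator_nm (ball_nullMeasurable hμ _ L) (measure_ball_ne_top hμ _ L) _).1)]
  have hterm : ∀ τ : Fin n → ({j // j ∈ Finset.Ico M L} → k),
      ∫ x, (ball (repV k M L τ) L).indicator (fun _ => f (repV k M L τ)) x ∂μ
        = f (repV k M L τ) * ((((Fintype.card k : ℝ) ^ (-L : ℤ)) ^ n : ℝ) : ℂ) := by
    intro τ
    rw [(integral_indicator_nm (ball_nullMeasurable hμ _ L) (measure_ball_ne_top hμ _ L) _).2]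
    rw [measure_ball hμ, ENNReal.toReal_ofReal (by positivity)]
    rw [Complex.real_smul]
    ring
  rw [Finset.sum_congr rfl (fun τ _ => hterm τ), ← Finset.sum_mul]

end Measure

/-! ### the linear functional `r` -/

section R
variable {r : LaurentSeries k →ₗ[k] k} {ν : ℤ}

lemma rkill (hν₁ : ∀ x : LaurentSeries k, x ≠ 0 → ν ≤ x.order → r x = 0)
    {z : LaurentSeries k} (hz : inB ν z) : r z = 0 := by
  rcases inB_iff_order.mp hz with rfl | h
  · exact map_zero r
  · rcases eq_or_ne z 0 with rfl | h0
    · exact map_zero r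
    · exact hν₁ z h0 h

lemma r_inB (hν₁ : ∀ x : LaurentSeries k, x ≠ 0 → ν ≤ x.order → r x = 0)
    {v : LaurentSeries k} (h : inB (ν-1) v) :
    r v = v.coeff (ν-1) * r (HahnSeries.single (ν-1) (1:k)) := by
  have hz : inB ν (v - v.coeff (ν-1) • (HahnSeries.single (ν-1) (1:k) : LaurentSeries k)) := by
    intro j hj
    rw [HahnSeries.coeff_sub, HahnSeries.coeff_smul, HahnSeries.coeff_single]
    rcases eq_or_ne j (ν-1) with rfl | hne
    · simp
    · simp [hne, h j (by omega)]
  have := rkill hν₁ hz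
  rw [map_sub, LinearMap.map_smul, sub_eq_zero] at this
  rw [this, smul_eq_mul]

lemma r_single_ne (hν₁ : ∀ x : LaurentSeries k, x ≠ 0 → ν ≤ x.order → r x = 0)
    (hν₂ : ∃ x : LaurentSeries k, x ≠ 0 ∧ ν - 1 ≤ x.order ∧ r x ≠ 0) :
    r (HahnSeries.single (ν-1) (1:k)) ≠ 0 := by
  obtain ⟨x, hx0, hord, hrx⟩ := hν₂
  have hin : inB (ν-1) x := inB_iff_order.mpr (Or.inr hord)
  intro h
  exact hrx (by rw [r_inB hν₁ hin, h, mul_zero])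

/-- `r (t^j * y)` where the product has order exactly `ν-1` is nonzero. -/
lemma r_tj_ne (hν₁ : ∀ x : LaurentSeries k, x ≠ 0 → ν ≤ x.order → r x = 0)
    (hν₂ : ∃ x : LaurentSeries k, x ≠ 0 ∧ ν - 1 ≤ x.order ∧ r x ≠ 0)
    {y : LaurentSeries k} (hy : y ≠ 0) :
    r ((HahnSeries.single (ν - 1 - y.order) (1:k) : LaurentSeries k) * y) ≠ 0 := by
  set j : ℤ := ν - 1 - y.order with hj
  have hin : inB (ν-1) ((HahnSeries.single j (1:k) : LaurentSeries k) * y) := by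
    intro p hp
    rw [single_one_mul_coeff]
    exact HahnSeries.coeff_eq_zero_of_lt_order (by omega)
  rw [r_inB hν₁ hin, single_one_mul_coeff]
  have : ν - 1 - j = y.order := by omega
  rw [this]
  exact mul_ne_zero ((mt HahnSeries.coeff_order_eq_zero.mp hy)) (r_single_ne hν₁ hν₂)

end R

/-! ### character sums -/

section Char
variable [Fintype k] {ψ : AddChar k ℂ}

lemma psi_sum {ι : Type*} (s : Finset ι) (h : ι → k) :
    ψ (∑ j ∈ s, h j) = ∏ j ∈ s, ψ (h j) := by
  classical
  induction s using Finset.cons_induction with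
  | empty => simp
  | cons a s ha ih => rw [Finset.sum_cons, Finset.prod_cons, AddChar.map_add_eq_mul, ih]

lemma inner_sum_ne (hψ : ψ ≠ 1) {b : k} (hb : b ≠ 0) : ∑ a : k, ψ (a * b) = 0 := by
  have : ∑ a : k, ψ (a * b) = ∑ a : k, ψ.mulShift b a := by
    refine Finset.sum_congr rfl fun a _ => ?_
    rw [AddChar.mulShift_apply, mul_comm]
  rw [this]
  refine AddChar.sum_eq_zero_iff_ne_zero.mpr ?_
  intro h
  rw [show (0 : AddChar k ℂ) = 1 from rfl] at h
  exact hψ ((AddChar.mulShift_unit_eq_one_iff ψ (Ne.isUnit hb)).mp h)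

open scoped Classical in
lemma inner_sum (hψ : ψ ≠ 1) (b : k) :
    ∑ a : k, ψ (a * b) = if b = 0 then (Fintype.card k : ℂ) else 0 := by
  split_ifs with h
  · simp [h, Finset.card_univ]
  · exact inner_sum_ne hψ h


open scoped Classical in
lemma char_sum (hψ : ψ ≠ 1) (A : Finset ℤ) (r : LaurentSeries k →ₗ[k] k)
    (w : LaurentSeries k) :
    ∑ σ : {x // x ∈ A} → k, ψ (r (repF k A σ * w))
      = if (∀ j ∈ A, r ((HahnSeries.single j (1:k) : LaurentSeries k) * w) = 0)
          then (Fintype.card k : ℂ) ^ A.card else 0 := by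
  have hsingle : ∀ (j : ℤ) (a : k),
      (HahnSeries.single j a : LaurentSeries k) * w
        = a • ((HahnSeries.single j (1:k) : LaurentSeries k) * w) := by
    intro j a
    ext p
    rw [HahnSeries.coeff_smul]
    have h1 : p = (p - j) + j := by ring
    rw [h1, HahnSeries.coeff_single_mul_add, HahnSeries.coeff_single_mul_add, one_mul, smul_eq_mul]
  have hstep : ∀ σ : {x // x ∈ A} → k,
      r (repF k A σ * w)
        = ∑ j ∈ A.attach, σ j * r ((HahnSeries.single (j:ℤ) (1:k) : LaurentSeries k) * w) := by
    intro σ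
    rw [repF, Finset.sum_mul, map_sum]
    refine Finset.sum_congr rfl fun j _ => ?_
    rw [hsingle (j:ℤ) (σ j), LinearMap.map_smul, smul_eq_mul]
  have hterm : ∀ σ : {x // x ∈ A} → k,
      ψ (r (repF k A σ * w))
        = ∏ j : {x // x ∈ A}, ψ (σ j * r ((HahnSeries.single (j:ℤ) (1:k) : LaurentSeries k) * w)) := by
    intro σ
    rw [hstep, psi_sum, Finset.univ_eq_attach]
  rw [Finset.sum_congr rfl (fun σ _ => hterm σ)]
  rw [← Fintype.piFinset_univ]
  have hswap := Finset.prod_univ_sum (fun _ : {x // x ∈ A} => (Finset.univ : Finset k))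
    (fun j a => ψ (a * r ((HahnSeries.single (j:ℤ) (1:k) : LaurentSeries k) * w)))
  rw [← hswap]
  rw [Finset.prod_congr rfl (fun j _ => inner_sum hψ _)]
  split_ifs with h
  · have : ∀ j : {x // x ∈ A},
        (if r ((HahnSeries.single (j:ℤ) (1:k) : LaurentSeries k) * w) = 0
          then (Fintype.card k : ℂ) else 0) = (Fintype.card k : ℂ) := by
      intro j
      rw [if_pos (h (j:ℤ) j.2)]
    rw [Finset.prod_congr rfl (fun j _ => this j), Finset.prod_const, Finset.card_univ, Fintype.card_coe]
  · push_neg at h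
    obtain ⟨j, hjA, hj⟩ := h
    exact Finset.prod_eq_zero (Finset.mem_univ (⟨j, hjA⟩ : {x // x ∈ A})) (if_neg hj)

open scoped Classical in
lemma char_sum_v {n : ℕ} (hψ : ψ ≠ 1) (A : Finset ℤ) (r : LaurentSeries k →ₗ[k] k)
    (w : Fin n → LaurentSeries k) :
    ∑ τ : Fin n → ({x // x ∈ A} → k), ψ (r (∑ i, repF k A (τ i) * w i))
      = if (∀ i, ∀ j ∈ A, r ((HahnSeries.single j (1:k) : LaurentSeries k) * w i) = 0)
          then (Fintype.card k : ℂ) ^ (A.card * n) else 0 := by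
  have hterm : ∀ τ : Fin n → ({x // x ∈ A} → k),
      ψ (r (∑ i, repF k A (τ i) * w i)) = ∏ i, ψ (r (repF k A (τ i) * w i)) := by
    intro τ
    rw [map_sum, psi_sum]
  rw [Finset.sum_congr rfl (fun τ _ => hterm τ)]
  rw [← Fintype.piFinset_univ]
  have hswap := Finset.prod_univ_sum (fun _ : Fin n => (Finset.univ : Finset ({x // x ∈ A} → k)))
    (fun i σ => ψ (r (repF k A σ * w i)))
  rw [← hswap]
  rw [Finset.prod_congr rfl (fun i _ => char_sum hψ A r (w i))]
  split_ifs with h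
  · rw [Finset.prod_congr rfl (fun i (_ : i ∈ Finset.univ) => if_pos (h i)),
      Finset.prod_const, Finset.card_univ, Fintype.card_fin, ← pow_mul]
  · push_neg at h
    obtain ⟨i, hi⟩ := h
    refine Finset.prod_eq_zero (Finset.mem_univ i) ?_
    rw [if_neg]
    intro h'
    obtain ⟨j, hjA, hj⟩ := hi
    exact hj (h' j hjA)
end Char

/-! ### splitting tables -/

section Split
variable {M N L : ℤ}

def eqvT (M N L : ℤ) (hMN : M ≤ N) (hNL : N ≤ L) :
    ({x // x ∈ Finset.Ico M L} → k) ≃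
      ({x // x ∈ Finset.Ico M N} → k) × ({x // x ∈ Finset.Ico N L} → k) where
  toFun σ := (fun j => σ ⟨j, by have := Finset.mem_Ico.mp j.2; exact Finset.mem_Ico.mpr (by omega)⟩,
              fun j => σ ⟨j, by have := Finset.mem_Ico.mp j.2; exact Finset.mem_Ico.mpr (by omega)⟩)
  invFun p := fun j =>
    if h : (j : ℤ) < N then p.1 ⟨j, by have := Finset.mem_Ico.mp j.2; exact Finset.mem_Ico.mpr (by omega)⟩
    else p.2 ⟨j, by have := Finset.mem_Ico.mp j.2; exact Finset.mem_Ico.mpr (by omega)⟩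
  left_inv σ := by
    funext j
    by_cases h : (j : ℤ) < N <;> simp [h]
  right_inv p := by
    ext j
    · have hj := Finset.mem_Ico.mp j.2
      simp [hj.2]
    · have hj := Finset.mem_Ico.mp j.2
      simp [not_lt.mpr hj.1]

lemma repF_eqvT (hMN : M ≤ N) (hNL : N ≤ L) (σ : {x // x ∈ Finset.Ico M L} → k) :
    repF k (Finset.Ico M L) σ
      = repF k (Finset.Ico M N) ((eqvT M N L hMN hNL) σ).1
        + repF k (Finset.Ico N L) ((eqvT M N L hMN hNL) σ).2 := by
  ext p
  rw [HahnSeries.coeff_add, coeff_repF, coeff_repF, coeff_repF]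
  by_cases h1 : p ∈ Finset.Ico M L
  · have h1' := Finset.mem_Ico.mp h1
    by_cases h2 : p < N
    · have hmem : p ∈ Finset.Ico M N := Finset.mem_Ico.mpr (by omega)
      have hnmem : ¬ p ∈ Finset.Ico N L := by rw [Finset.mem_Ico]; omega
      rw [dif_pos h1, dif_pos hmem, dif_neg hnmem, add_zero]
      simp [eqvT]
    · have hmem : p ∈ Finset.Ico N L := Finset.mem_Ico.mpr (by omega)
      have hnmem : ¬ p ∈ Finset.Ico M N := by rw [Finset.mem_Ico]; omega
      rw [dif_pos h1, dif_neg hnmem, dif_pos hmem, zero_add]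
      simp [eqvT]
  · have h2 : ¬ p ∈ Finset.Ico M N := by rw [Finset.mem_Ico] at *; omega
    have h3 : ¬ p ∈ Finset.Ico N L := by rw [Finset.mem_Ico] at *; omega
    rw [dif_neg h1, dif_neg h2, dif_neg h3, add_zero]

end Split

/-! ### the two key conditions -/

section Cond
variable {r : LaurentSeries k →ₗ[k] k} {ν : ℤ}

lemma inB_single {m j : ℤ} (h : m ≤ j) (a : k) :
    inB m (HahnSeries.single j a : LaurentSeries k) := by
  intro p hp
  exact HahnSeries.coeff_single_of_ne (by omega)

lemma cond_iff₁ (hν₁ : ∀ x : LaurentSeries k, x ≠ 0 → ν ≤ x.order → r x = 0)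
    (hν₂ : ∃ x : LaurentSeries k, x ≠ 0 ∧ ν - 1 ≤ x.order ∧ r x ≠ 0)
    {N L : ℤ} {y : LaurentSeries k} (hNL : N ≤ L) (hyL : ν - y.order ≤ L) :
    (∀ j ∈ Finset.Ico N L, r ((HahnSeries.single j (1:k) : LaurentSeries k) * y) = 0)
      ↔ inB (ν - N) y := by
  constructor
  · intro h
    by_contra hy
    obtain ⟨e, he, hce⟩ : ∃ e, e < ν - N ∧ y.coeff e ≠ 0 := by
      by_contra h'
      push_neg at h'
      exact hy fun e he' => h' e he'
    have hy0 : y ≠ 0 := fun h0 => hce (by rw [h0]; rfl)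
    have hord : y.order ≤ e := HahnSeries.order_le_of_coeff_ne_zero hce
    have hj : ν - 1 - y.order ∈ Finset.Ico N L := Finset.mem_Ico.mpr (by omega)
    exact r_tj_ne hν₁ hν₂ hy0 (h _ hj)
  · intro h j hj
    rcases eq_or_ne y 0 with rfl | hy0
    · rw [mul_zero, map_zero]
    · have hordy : ν - N ≤ y.order := by
        rcases inB_iff_order.mp h with h0 | h0
        · exact absurd h0 hy0
        · exact h0
      have hj' := Finset.mem_Ico.mp hj
      refine rkill hν₁ (inB_mono (show ν ≤ j + (ν - N) by omega) ?_)
      exact inB_mul (inB_single le_rfl (1:k)) (inB_iff_order.mpr (Or.inr hordy))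

lemma cond_iff₂ (hν₁ : ∀ x : LaurentSeries k, x ≠ 0 → ν ≤ x.order → r x = 0)
    (hν₂ : ∃ x : LaurentSeries k, x ≠ 0 ∧ ν - 1 ≤ x.order ∧ r x ≠ 0)
    {M N : ℤ} (hMN : M ≤ N) {w : LaurentSeries k} (hw : inB M w) :
    (∀ j ∈ Finset.Ico (ν - N) (ν - M), r ((HahnSeries.single j (1:k) : LaurentSeries k) * w) = 0)
      ↔ inB N w := by
  constructor
  · intro h
    have key : ∀ d : ℕ, ∀ e : ℤ, e < M + d → e < N → w.coeff e = 0 := by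
      intro d
      induction d with
      | zero => intro e he _; exact hw e (by omega)
      | succ d ih =>
        intro e he heN
        rcases lt_or_ge e (M + d) with h' | h'
        · exact ih e h' heN
        have heq : e = M + d := by omega
        have hjmem : ν - 1 - e ∈ Finset.Ico (ν - N) (ν - M) := Finset.mem_Ico.mpr (by omega)
        have hin : inB (ν - 1) ((HahnSeries.single (ν-1-e) (1:k) : LaurentSeries k) * w) := by
          intro p hp
          rw [single_one_mul_coeff]
          rcases lt_or_ge (p - (ν-1-e)) M with hc | hc
          · exact hw _ hc
          · exact ih _ (by omega) (by omega)
        have := h _ hjmem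
        rw [r_inB hν₁ hin, single_one_mul_coeff] at this
        have hco : ν - 1 - (ν - 1 - e) = e := by omega
        rw [hco] at this
        rcases mul_eq_zero.mp this with h0 | h0
        · exact h0
        · exact absurd h0 (r_single_ne hν₁ hν₂)
    intro e he
    rcases lt_or_ge e M with h' | h'
    · exact hw e h'
    · exact key ((e - M).toNat + 1) e (by omega) he
  · intro h j hj
    have hj' := Finset.mem_Ico.mp hj
    refine rkill hν₁ (inB_mono (show ν ≤ j + N by omega) ?_)
    exact inB_mul (inB_single le_rfl (1:k)) h

end Cond

lemma qpow_helper {c : ℂ} (hc : c ≠ 0) {N L : ℤ} (hNL : N ≤ L) (n : ℕ) :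
    (c ^ (-L : ℤ)) ^ n * c ^ ((L - N).toNat * n) = c ^ (-(N * n) : ℤ) := by
  rw [← zpow_natCast c ((L - N).toNat * n), ← zpow_natCast (c ^ (-L:ℤ)) n, ← zpow_mul,
    ← zpow_add₀ hc]
  congr 1
  have : ((L - N).toNat : ℤ) = L - N := by omega
  push_cast [this]
  ring

/-! ### the Fourier transform formula -/

section FT
variable [Fintype k] {n : ℕ} [MeasurableSpace (Fin n → LaurentSeries k)]
  {μ : Measure (Fin n → LaurentSeries k)}
  {ψ : AddChar k ℂ} {r : LaurentSeries k →ₗ[k] k} {ν : ℤ}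

open scoped Classical in
lemma FT_eq (hμ : HMeas μ) (hψ : ψ ≠ 1)
    (hν₁ : ∀ x : LaurentSeries k, x ≠ 0 → ν ≤ x.order → r x = 0)
    (hν₂ : ∃ x : LaurentSeries k, x ≠ 0 ∧ ν - 1 ≤ x.order ∧ r x ≠ 0)
    {M N : ℤ} (hMN : M ≤ N) (φ : (Fin n → LaurentSeries k) → ℂ)
    (hs : ∀ x, φ x ≠ 0 → ∀ i, inB M (x i))
    (hi : ∀ x z, (∀ i, inB N (z i)) → φ (x + z) = φ x)
    (y : Fin n → LaurentSeries k) :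
    (∫ x, φ x * ψ (r (∑ i, x i * y i)) ∂μ)
      = (if ∀ i, inB (ν - N) (y i) then 1 else 0)
        * (Fintype.card k : ℂ) ^ (-(N * n) : ℤ)
        * ∑ τ : Fin n → ({x // x ∈ Finset.Ico M N} → k),
            φ (repV k M N τ) * ψ (r (∑ i, repV k M N τ i * y i)) := by
  set Q : ℂ := (Fintype.card k : ℂ) with hQdef
  have hQ : Q ≠ 0 := by
    rw [hQdef]
    exact_mod_cast Fintype.card_ne_zero
  set L : ℤ := N + ((∑ i, (ν - (y i).order - N).toNat : ℕ) : ℤ) with hL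
  have hNL : N ≤ L := by
    have : (0:ℤ) ≤ ((∑ i, (ν - (y i).order - N).toNat : ℕ) : ℤ) := Int.natCast_nonneg _
    omega
  have hyL : ∀ i, ν - (y i).order ≤ L := by
    intro i
    have h1 : (ν - (y i).order - N).toNat ≤ (∑ i, (ν - (y i).order - N).toNat : ℕ) :=
      Finset.single_le_sum (f := fun i => (ν - (y i).order - N).toNat)
        (fun _ _ => Nat.zero_le _) (Finset.mem_univ i)
    have h1' : ((ν - (y i).order - N).toNat : ℤ) ≤ ((∑ i, (ν - (y i).order - N).toNat : ℕ) : ℤ) := by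
      exact_mod_cast h1
    have h2 := Int.self_le_toNat (ν - (y i).order - N)
    omega
  have hML : M ≤ L := le_trans hMN hNL
  -- invariance of the integrand at level L
  have hfi : ∀ x z, (∀ i, inB L (z i)) →
      φ (x + z) * ψ (r (∑ i, (x + z) i * y i)) = φ x * ψ (r (∑ i, x i * y i)) := by
    intro x z hz
    have h1 : φ (x + z) = φ x := hi x z (fun i => inB_mono hNL (hz i))
    have h2 : r (∑ i, z i * y i) = 0 := by
      rw [map_sum]
      refine Finset.sum_eq_zero fun i _ => ?_
      rcases eq_or_ne (y i) 0 with h0 | h0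
      · rw [h0, mul_zero, map_zero]
      · have hordy : inB ((y i).order) (y i) := inB_iff_order.mpr (Or.inr le_rfl)
        refine rkill hν₁ (inB_mono (show ν ≤ L + (y i).order by have := hyL i; omega) ?_)
        exact inB_mul (hz i) hordy
      
    have h3 : (∑ i, (x + z) i * y i) = (∑ i, x i * y i) + (∑ i, z i * y i) := by
      rw [← Finset.sum_add_distrib]
      refine Finset.sum_congr rfl fun i _ => ?_
      rw [Pi.add_apply]
      ring
    rw [h1, h3, map_add, h2, add_zero]
  have hfs : ∀ x, φ x * ψ (r (∑ i, x i * y i)) ≠ 0 → ∀ i, inB M (x i) := by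
    intro x hx
    refine hs x fun h0 => hx ?_
    rw [h0, zero_mul]
  have hint := integral_eq_sum hμ hML (fun x => φ x * ψ (r (∑ i, x i * y i))) hfs hfi
  rw [hint]
  -- split the sum over tables on [M,L) into [M,N) × [N,L)
  set E := (Equiv.piCongrRight (fun _ : Fin n => eqvT M N L hMN hNL)).trans
    (Equiv.arrowProdEquivProdArrow _ _ _) with hE
  have hstep : ∀ τ : Fin n → ({x // x ∈ Finset.Ico M L} → k),
      φ (repV k M L τ) * ψ (r (∑ i, repV k M L τ i * y i))
        = (φ (repV k M N (E τ).1) * ψ (r (∑ i, repV k M N (E τ).1 i * y i)))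
          * ψ (r (∑ i, repF k (Finset.Ico N L) ((E τ).2 i) * y i)) := by
    intro τ
    have hEτ1 : ∀ i, (E τ).1 i = (eqvT M N L hMN hNL (τ i)).1 := fun i => rfl
    have hEτ2 : ∀ i, (E τ).2 i = (eqvT M N L hMN hNL (τ i)).2 := fun i => rfl
    have hrep : ∀ i, repV k M L τ i
        = repV k M N (E τ).1 i + repF k (Finset.Ico N L) ((E τ).2 i) := by
      intro i
      rw [repV, repV, hEτ1, hEτ2]
      exact repF_eqvT hMN hNL (τ i)
    have hφ : φ (repV k M L τ) = φ (repV k M N (E τ).1) := by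
      have : repV k M L τ = repV k M N (E τ).1 + (fun i => repF k (Finset.Ico N L) ((E τ).2 i)) := by
        funext i
        exact hrep i
      rw [this]
      exact hi _ _ (fun i => inB_repF le_rfl _)
    have hψs : (∑ i, repV k M L τ i * y i)
        = (∑ i, repV k M N (E τ).1 i * y i) + (∑ i, repF k (Finset.Ico N L) ((E τ).2 i) * y i) := by
      rw [← Finset.sum_add_distrib]
      refine Finset.sum_congr rfl fun i _ => ?_
      rw [hrep i]
      ring
    rw [hφ, hψs, map_add, AddChar.map_add_eq_mul, mul_assoc]
  rw [Finset.sum_congr rfl (fun τ _ => hstep τ)]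
  rw [Equiv.sum_comp E
    (fun p : (Fin n → ({x // x ∈ Finset.Ico M N} → k)) × (Fin n → ({x // x ∈ Finset.Ico N L} → k)) =>
      (φ (repV k M N p.1) * ψ (r (∑ i, repV k M N p.1 i * y i)))
        * ψ (r (∑ i, repF k (Finset.Ico N L) (p.2 i) * y i)))]
  rw [Fintype.sum_prod_type]
  simp only [Prod.fst, Prod.snd]
  rw [← Finset.sum_mul_sum]
  rw [char_sum_v hψ (Finset.Ico N L) r y]
  have hcc : (∀ i, ∀ j ∈ Finset.Ico N L,
      r ((HahnSeries.single j (1:k) : LaurentSeries k) * y i) = 0) ↔ ∀ i, inB (ν - N) (y i) :=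
    forall_congr' fun i => cond_iff₁ hν₁ hν₂ hNL (hyL i)
  simp only [hcc, Int.card_Ico]
  split_ifs with h
  · have hq := qpow_helper hQ hNL n
    push_cast
    rw [← hQdef]
    calc (∑ τ : Fin n → ({x // x ∈ Finset.Ico M N} → k),
            φ (repV k M N τ) * ψ (r (∑ i, repV k M N τ i * y i))) * Q ^ ((L - N).toNat * n)
          * (Q ^ (-L : ℤ)) ^ n
        = (∑ τ : Fin n → ({x // x ∈ Finset.Ico M N} → k),
            φ (repV k M N τ) * ψ (r (∑ i, repV k M N τ i * y i)))
            * ((Q ^ (-L : ℤ)) ^ n * Q ^ ((L - N).toNat * n)) := by ring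
      _ = _ := by rw [hq]; ring
  · push_cast
    ring

end FT

lemma qpow_final {c : ℂ} (hc : c ≠ 0) {M N ν : ℤ} (hMN : M ≤ N) (n : ℕ) :
    c ^ (-((ν - M) * n) : ℤ) * c ^ (-(N * n) : ℤ) * c ^ ((N - M).toNat * n)
      = c ^ (-(n * ν) : ℤ) := by
  rw [← zpow_natCast c ((N - M).toNat * n), ← zpow_add₀ hc, ← zpow_add₀ hc]
  congr 1
  have : ((N - M).toNat : ℤ) = N - M := by omega
  push_cast [this]
  ring
end S16


open S16 in
/-- Local Fourier inversion over `K = k((t))`, `k` a finite field of cardinality `q`: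
if `r : K → k` is a nonzero `k`-linear map of conductor `ν` and `φ` is a
Schwartz–Bruhat function on `K^n` of some level `(M,N)` (supported on `(t^M R)^n` and
invariant under `(t^N R)^n`), then `𝓕𝓕φ(x) = q^{−nν} φ(−x)`. -/
theorem stmt_16 (k : Type*) [Field k] [Fintype k]
    (ψ : AddChar k ℂ) (hψ : ψ ≠ 1)
    (r : LaurentSeries k →ₗ[k] k) (hr : r ≠ 0)
    (ν : ℤ)
    (hν₁ : ∀ x : LaurentSeries k, x ≠ 0 → ν ≤ x.order → r x = 0)
    (hν₂ : ∃ x : LaurentSeries k, x ≠ 0 ∧ ν - 1 ≤ x.order ∧ r x ≠ 0)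
    (n : ℕ)
    [MeasurableSpace (Fin n → LaurentSeries k)]
    (μ : Measure (Fin n → LaurentSeries k))
    (hμ : ∀ (c : Fin n → LaurentSeries k) (m : Fin n → ℤ),
      μ {x : Fin n → LaurentSeries k | ∀ i, ∃ y : LaurentSeries k,
          (∀ i' : ℤ, i' < 0 → y.coeff i' = 0) ∧
          x i = c i + (HahnSeries.single (1 : ℤ) (1 : k) : LaurentSeries k) ^ (m i) * y}
        = ENNReal.ofReal (∏ i, (Fintype.card k : ℝ) ^ (-(m i))))
    (φ : (Fin n → LaurentSeries k) → ℂ) (M N : ℤ) (hMN : M ≤ N)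
    (hsupp : ∀ x, φ x ≠ 0 → ∀ i, x i = 0 ∨ M ≤ (x i).order)
    (hinv : ∀ x y : Fin n → LaurentSeries k,
      (∀ i, y i = 0 ∨ N ≤ (y i).order) → φ (x + y) = φ x) :
    ∀ x : Fin n → LaurentSeries k,
      fourierTransform k n μ ψ r (fourierTransform k n μ ψ r φ) x
        = (Fintype.card k : ℂ) ^ (-((n : ℤ) * ν)) * φ (-x) := by
  classical
  intro x
  have hμ' : HMeas μ := hμ
  have hs : ∀ z, φ z ≠ 0 → ∀ i, inB M (z i) :=
    fun z h i => inB_iff_order.mpr (hsupp z h i)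
  have hi : ∀ a z, (∀ i, inB N (z i)) → φ (a + z) = φ a :=
    fun a z h => hinv a z (fun i => inB_iff_order.mp (h i))
  set Q : ℂ := (Fintype.card k : ℂ) with hQdef
  have hQ : Q ≠ 0 := by rw [hQdef]; exact_mod_cast Fintype.card_ne_zero
  set Φ := fourierTransform k n μ ψ r φ with hΦ
  have hΦeq : ∀ y, Φ y = (if ∀ i, inB (ν - N) (y i) then 1 else 0)
      * Q ^ (-(N * n) : ℤ) * ∑ τ : Fin n → ({x // x ∈ Finset.Ico M N} → k),
          φ (repV k M N τ) * ψ (r (∑ i, repV k M N τ i * y i)) := by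
    intro y
    rw [hΦ]
    exact FT_eq hμ' hψ hν₁ hν₂ hMN φ hs hi y
  have hΦs : ∀ y, Φ y ≠ 0 → ∀ i, inB (ν - N) (y i) := by
    intro y hy
    by_contra hc
    apply hy
    rw [hΦeq y, if_neg hc]
    ring
  have hΦi : ∀ y z, (∀ i, inB (ν - M) (z i)) → Φ (y + z) = Φ y := by
    intro y z hz
    rw [hΦeq, hΦeq]
    have hzN : ∀ i, inB (ν - N) (z i) := fun i => inB_mono (by omega) (hz i)
    have hcond : (∀ i, inB (ν - N) ((y + z) i)) ↔ (∀ i, inB (ν - N) (y i)) := by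
      constructor
      · intro h i
        have := inB_add (h i) (inB_neg (hzN i))
        simpa using this
      · intro h i
        have := inB_add (h i) (hzN i)
        simpa using this
    have hterm : ∀ τ : Fin n → ({x // x ∈ Finset.Ico M N} → k),
        ψ (r (∑ i, repV k M N τ i * (y + z) i)) = ψ (r (∑ i, repV k M N τ i * y i)) := by
      intro τ
      have hsplit : (∑ i, repV k M N τ i * (y + z) i)
          = (∑ i, repV k M N τ i * y i) + (∑ i, repV k M N τ i * z i) := by
        rw [← Finset.sum_add_distrib]
        exact Finset.sum_congr rfl fun i _ => by rw [Pi.add_apply]; ring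
      have hzero : r (∑ i, repV k M N τ i * z i) = 0 := by
        rw [map_sum]
        refine Finset.sum_eq_zero fun i _ => ?_
        refine rkill hν₁ (inB_mono (show ν ≤ M + (ν - M) by omega) ?_)
        exact inB_mul (inB_repF le_rfl _) (hz i)
      rw [hsplit, map_add, hzero, add_zero]
    simp only [hcond]
    rw [Finset.sum_congr rfl (fun τ _ => by rw [hterm τ])]
  have h2 := FT_eq hμ' hψ hν₁ hν₂ (show ν - N ≤ ν - M by omega) Φ hΦs hΦi x
  have hgoal : fourierTransform k n μ ψ r Φ x
      = (if ∀ i, inB (ν - (ν - M)) (x i) then 1 else 0) * Q ^ (-((ν - M) * n) : ℤ)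
        * ∑ τ : Fin n → ({x // x ∈ Finset.Ico (ν - N) (ν - M)} → k),
            Φ (repV k (ν - N) (ν - M) τ) * ψ (r (∑ i, repV k (ν - N) (ν - M) τ i * x i)) := h2
  rw [hgoal]
  have hM' : ν - (ν - M) = M := by ring
  rw [hM']
  by_cases hx : ∀ i, inB M (x i)
  case neg =>
    rw [if_neg hx]
    have hφ0 : φ (-x) = 0 := by
      by_contra h
      refine hx fun i => ?_
      have := hs (-x) h i
      have h2 := inB_neg this
      simpa using h2
    rw [hφ0]
    ring
  case pos =>
  rw [if_pos hx, one_mul]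
  have hΦrep : ∀ τ : Fin n → ({x // x ∈ Finset.Ico (ν - N) (ν - M)} → k),
      Φ (repV k (ν - N) (ν - M) τ)
        = Q ^ (-(N * n) : ℤ) * ∑ τ₁ : Fin n → ({x // x ∈ Finset.Ico M N} → k),
            φ (repV k M N τ₁)
              * ψ (r (∑ i, repV k M N τ₁ i * repV k (ν - N) (ν - M) τ i)) := by
    intro τ
    rw [hΦeq, if_pos (show ∀ i, inB (ν - N) (repV k (ν - N) (ν - M) τ i) from
      fun i => inB_repF le_rfl _), one_mul]
  rw [Finset.sum_congr rfl (fun τ _ => by rw [hΦrep τ])]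
  -- pull out the constant and merge characters
  have hcomb : ∀ (τ : Fin n → ({x // x ∈ Finset.Ico (ν - N) (ν - M)} → k))
      (τ₁ : Fin n → ({x // x ∈ Finset.Ico M N} → k)),
      ψ (r (∑ i, repV k M N τ₁ i * repV k (ν - N) (ν - M) τ i))
          * ψ (r (∑ i, repV k (ν - N) (ν - M) τ i * x i))
        = ψ (r (∑ i, repV k (ν - N) (ν - M) τ i * (repV k M N τ₁ + x) i)) := by
    intro τ τ₁
    have harg : (∑ i, repV k M N τ₁ i * repV k (ν - N) (ν - M) τ i)
          + (∑ i, repV k (ν - N) (ν - M) τ i * x i)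
        = ∑ i, repV k (ν - N) (ν - M) τ i * (repV k M N τ₁ + x) i := by
      rw [← Finset.sum_add_distrib]
      refine Finset.sum_congr rfl fun i _ => ?_
      rw [Pi.add_apply]
      ring
    rw [← AddChar.map_add_eq_mul, ← map_add, harg]
  have hstep2 : (∑ τ : Fin n → ({x // x ∈ Finset.Ico (ν - N) (ν - M)} → k),
      (Q ^ (-(N * n) : ℤ) * ∑ τ₁ : Fin n → ({x // x ∈ Finset.Ico M N} → k),
          φ (repV k M N τ₁)
            * ψ (r (∑ i, repV k M N τ₁ i * repV k (ν - N) (ν - M) τ i)))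
        * ψ (r (∑ i, repV k (ν - N) (ν - M) τ i * x i)))
      = Q ^ (-(N * n) : ℤ) * ∑ τ₁ : Fin n → ({x // x ∈ Finset.Ico M N} → k),
          φ (repV k M N τ₁)
            * ∑ τ : Fin n → ({x // x ∈ Finset.Ico (ν - N) (ν - M)} → k),
                ψ (r (∑ i, repV k (ν - N) (ν - M) τ i * (repV k M N τ₁ + x) i)) := by
    calc (∑ τ : Fin n → ({x // x ∈ Finset.Ico (ν - N) (ν - M)} → k),
        (Q ^ (-(N * n) : ℤ) * ∑ τ₁ : Fin n → ({x // x ∈ Finset.Ico M N} → k),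
            φ (repV k M N τ₁)
              * ψ (r (∑ i, repV k M N τ₁ i * repV k (ν - N) (ν - M) τ i)))
          * ψ (r (∑ i, repV k (ν - N) (ν - M) τ i * x i)))
        = ∑ τ : Fin n → ({x // x ∈ Finset.Ico (ν - N) (ν - M)} → k),
            ∑ τ₁ : Fin n → ({x // x ∈ Finset.Ico M N} → k),
              Q ^ (-(N * n) : ℤ) * (φ (repV k M N τ₁)
                * ψ (r (∑ i, repV k (ν - N) (ν - M) τ i * (repV k M N τ₁ + x) i))) := by
          refine Finset.sum_congr rfl fun τ _ => ?_
          rw [Finset.mul_sum, Finset.sum_mul]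
          refine Finset.sum_congr rfl fun τ₁ _ => ?_
          rw [← hcomb τ τ₁]
          ring
      _ = ∑ τ₁ : Fin n → ({x // x ∈ Finset.Ico M N} → k),
            ∑ τ : Fin n → ({x // x ∈ Finset.Ico (ν - N) (ν - M)} → k),
              Q ^ (-(N * n) : ℤ) * (φ (repV k M N τ₁)
                * ψ (r (∑ i, repV k (ν - N) (ν - M) τ i * (repV k M N τ₁ + x) i))) :=
          Finset.sum_comm
      _ = _ := by
          simp only [Finset.mul_sum]
  rw [hstep2]
  have hchar : ∀ τ₁ : Fin n → ({x // x ∈ Finset.Ico M N} → k),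
      (∑ τ : Fin n → ({x // x ∈ Finset.Ico (ν - N) (ν - M)} → k),
          ψ (r (∑ i, repV k (ν - N) (ν - M) τ i * (repV k M N τ₁ + x) i)))
        = if (∀ i, ∀ j ∈ Finset.Ico (ν - N) (ν - M),
              r ((HahnSeries.single j (1:k) : LaurentSeries k) * (repV k M N τ₁ + x) i) = 0)
            then (Fintype.card k : ℂ) ^ ((Finset.Ico (ν - N) (ν - M)).card * n) else 0 :=
    fun τ₁ => char_sum_v (n := n) hψ (Finset.Ico (ν - N) (ν - M)) r (repV k M N τ₁ + x)
  rw [Finset.sum_congr rfl (fun τ₁ _ => by rw [hchar τ₁])]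
  -- the collapsing condition
  set τ₀ := tblOf M N (-x) with hτ₀
  have hccase : ∀ τ₁ : Fin n → ({x // x ∈ Finset.Ico M N} → k),
      (∀ i, ∀ j ∈ Finset.Ico (ν - N) (ν - M),
          r ((HahnSeries.single j (1:k) : LaurentSeries k) * (repV k M N τ₁ + x) i) = 0)
        ↔ τ₁ = τ₀ := by
    intro τ₁
    have hwM : ∀ i, inB M ((repV k M N τ₁ + x) i) := fun i => by
      have := inB_add (inB_repF (le_refl M) (τ₁ i)) (hx i)
      simpa [repV] using this
    rw [forall_congr' fun i => cond_iff₂ hν₁ hν₂ hMN (hwM i)]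
    constructor
    · intro h
      funext i j
      have hj := Finset.mem_Ico.mp j.2
      have hco := h i (j : ℤ) hj.2
      rw [Pi.add_apply, HahnSeries.coeff_add, repV, coeff_repF, dif_pos j.2] at hco
      have heq : τ₁ i j = -((x i).coeff (j : ℤ)) := by
        have h3 : τ₁ i ⟨(j : ℤ), j.2⟩ = τ₁ i j := by
          congr
        rw [h3] at hco
        exact eq_neg_of_add_eq_zero_left hco
      rw [heq, hτ₀, tblOf]
      simp [HahnSeries.coeff_neg]
    · intro h i
      subst h
      intro p hp
      rw [Pi.add_apply, HahnSeries.coeff_add, repV, coeff_repF]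
      by_cases hpm : p ∈ Finset.Ico M N
      · rw [dif_pos hpm, hτ₀, tblOf]
        simp
      · have hpM : p < M := by
          rw [Finset.mem_Ico] at hpm
          omega
        rw [dif_neg hpm, zero_add]
        exact hx i p hpM
  rw [Finset.sum_congr rfl (fun τ₁ _ => by rw [if_congr (hccase τ₁) rfl rfl])]
  simp only [mul_ite, mul_zero]
  rw [Finset.sum_ite_eq' Finset.univ τ₀
    (fun τ₁ => φ (repV k M N τ₁) * Q ^ ((Finset.Ico (ν - N) (ν - M)).card * n))]
  rw [if_pos (Finset.mem_univ τ₀)]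
  -- φ at the representative of -x
  have hzN : ∀ i, inB N ((repV k M N τ₀ + x) i) := by
    intro i p hp
    rw [Pi.add_apply, HahnSeries.coeff_add, repV, coeff_repF]
    by_cases hpm : p ∈ Finset.Ico M N
    · rw [dif_pos hpm, hτ₀, tblOf]
      simp
    · have hpM : p < M := by
        rw [Finset.mem_Ico] at hpm
        omega
      rw [dif_neg hpm, zero_add]
      exact hx i p hpM
  have hφτ₀ : φ (repV k M N τ₀) = φ (-x) := by
    have hadd : -x + (repV k M N τ₀ + x) = repV k M N τ₀ := by abel
    have := hi (-x) (repV k M N τ₀ + x) hzN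
    rw [hadd] at this
    exact this
  rw [hφτ₀, Int.card_Ico]
  have hcard : (ν - M - (ν - N)).toNat = (N - M).toNat := by omega
  rw [hcard]
  have hfin := qpow_final hQ hMN (ν := ν) n
  calc Q ^ (-((ν - M) * n) : ℤ) * (Q ^ (-(N * n) : ℤ) * (φ (-x) * Q ^ ((N - M).toNat * n)))
      = (Q ^ (-((ν - M) * n) : ℤ) * Q ^ (-(N * n) : ℤ) * Q ^ ((N - M).toNat * n)) * φ (-x) := by
        ring
    _ = Q ^ (-(n * ν) : ℤ) * φ (-x) := by rw [hfin]
    _ = _ := by norm_num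
end
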